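/- arXiv:1112.0118 — 3 statements merged into one kernel-verified Lean document; each statement's English description precedes it below -/
import Mathlib

section
/- For every w ∈ 𝔡_1 and every integer s ≥ 0, one has Z_s(z_1 w) = Σ_{ℓ=0}^{s} z_{ℓ+1} Z_{s−ℓ}(w). -/
open scoped BigOperators

noncomputable section

attribute [local instance 10] Classical.propDecidable

/-- The `q`-integer `[n] = (1 - q^n)/(1 - q)`. -/
def qint (q : ℝ) (n : ℕ) : ℝ := (1 - q ^ n) / (1 - q)

/-- `I(r,n)`: multi-indices of positive integers of depth `r` and weight `n`. -/
def Ifin (r n : ℕ) : Finset (Fin r → ℕ) :=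
  (Fintype.piFinset fun _ : Fin r => Finset.Icc 1 n).filter fun c => (∑ i, c i) = n

/-- `I₀(r,n)`: admissible multi-indices (first entry at least 2). -/
def I0fin (r n : ℕ) : Finset (Fin r → ℕ) :=
  (Ifin r n).filter fun c => ∀ h : 0 < r, 2 ≤ c ⟨0, h⟩

/-- The `q`-analogue of the multiple zeta value,
`ζ_q(α) = Σ_{m_1 > ... > m_r > 0} Π_j q^{(α_j - 1) m_j}/[m_j]^{α_j}`. -/
def zetaQ (q : ℝ) {r : ℕ} (α : Fin r → ℕ) : ℝ :=
  ∑' m : {m : Fin r → ℕ // (∀ i j : Fin r, i < j → m j < m i) ∧ ∀ i, 0 < m i},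
    ∏ j, q ^ ((α j - 1) * m.1 j) / qint q (m.1 j) ^ α j

/-- `K_{b,n}(M) = Σ_{α ∈ I₀(b,n)} Σ_{m_1 > ... > m_{b-1} > m_b = M} Π_j q^{(α_j-1)m_j}/[m_j]^{α_j}`. -/
def Kfun (q : ℝ) (b n M : ℕ) : ℝ :=
  ∑ α ∈ I0fin b n,
    ∑' m : {m : Fin b → ℕ //
        (∀ i j : Fin b, i < j → m j < m i) ∧
          ∀ h : 0 < b, m ⟨b - 1, Nat.sub_lt h Nat.one_pos⟩ = M},
      ∏ j, q ^ ((α j - 1) * m.1 j) / qint q (m.1 j) ^ α j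

/-- `f_ℓ(N,M) = Σ_{N = k_1 > k_2 > ... > k_ℓ > M} (q^{k_1-M}/[k_1-M]) Π_{j=2}^{ℓ} 1/[k_j-M]`. -/
def fS (q : ℝ) (l N M : ℕ) : ℝ :=
  ∑ k ∈ (Fintype.piFinset fun _ : Fin l => Finset.Ioc M N).filter
      (fun k => (∀ i j : Fin l, i < j → k j < k i) ∧ ∀ h : 0 < l, k ⟨0, h⟩ = N),
    ∏ j : Fin l, (if (j : ℕ) = 0 then q ^ (k j - M) else 1) / qint q (k j - M)

/-- `g_{ℓ,β}(M) = Σ_{M = m_1 ≥ m_2 ≥ ... ≥ m_ℓ ≥ 1} (q^{(β-1)m_1}/[m_1]^β) Π_{j=2}^{ℓ} q^{m_j}/[m_j]`. -/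
def gS (q : ℝ) (l β M : ℕ) : ℝ :=
  ∑ m ∈ (Fintype.piFinset fun _ : Fin l => Finset.Icc 1 M).filter
      (fun m => (∀ i j : Fin l, i ≤ j → m j ≤ m i) ∧ ∀ h : 0 < l, m ⟨0, h⟩ = M),
    ∏ j : Fin l, if (j : ℕ) = 0 then q ^ ((β - 1) * m j) / qint q (m j) ^ β
      else q ^ m j / qint q (m j)

/-- `h_{r,ℓ}(N_1,...,N_r,M) = Σ_{c ∈ I(r,ℓ)} (Π_{j=1}^{r-1} f_{c_j}(N_j,N_{j+1})) f_{c_r}(N_r,M)`. -/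
def hS (q : ℝ) (r l : ℕ) (N : Fin r → ℕ) (M : ℕ) : ℝ :=
  ∑ c ∈ Ifin r l,
    ∏ j : Fin r, fS q (c j) (N j) (if h : (j : ℕ) + 1 < r then N ⟨(j : ℕ) + 1, h⟩ else M)

/-- `p(n_1,...,n_s;m) = (q^{n_1-m}/[n_1-m]) Π_{j=2}^{s} 1/[n_j-m]`, with `p(∅;m) = 1`. -/
def pS (q : ℝ) {s : ℕ} (n : Fin s → ℕ) (m : ℕ) : ℝ :=
  ∏ j : Fin s, (if (j : ℕ) = 0 then q ^ (n j - m) else 1) / qint q (n j - m)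

/-! ### The algebras 𝔡, 𝔡_ξ and 𝔡₁ -/

/-- The alphabet `S = {z_k}_{k ≥ 1} ∪ {ξ_k}_{k ≥ 1}`: `Sum.inl k = z_k`, `Sum.inr k = ξ_k`. -/
abbrev Letter : Type := ℕ+ ⊕ ℕ+

/-- The noncommutative polynomial algebra 𝔡 over ℤ freely generated by `S`. -/
abbrev Dfree : Type := MonoidAlgebra ℤ (FreeMonoid Letter)

/-- The subalgebra 𝔡_ξ generated by the `ξ_k`, realized as a free algebra on `{ξ_k}_{k≥1}`. -/
abbrev DXi : Type := MonoidAlgebra ℤ (FreeMonoid ℕ+)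

/-- The subalgebra 𝔡₁ generated by `z_1` and `ξ_1`, realized as a free algebra on two letters
(`false = z_1`, `true = ξ_1`). -/
abbrev DOne : Type := MonoidAlgebra ℤ (FreeMonoid Bool)

/-- The generator `z_k` of 𝔡. -/
def zL (k : ℕ+) : Dfree := MonoidAlgebra.single (FreeMonoid.of (Sum.inl k)) 1

/-- The generator `ξ_k` of 𝔡. -/
def xiL (k : ℕ+) : Dfree := MonoidAlgebra.single (FreeMonoid.of (Sum.inr k)) 1

/-- The generator `ξ_k` of 𝔡_ξ. -/
def xiX (k : ℕ+) : DXi := MonoidAlgebra.single (FreeMonoid.of k) 1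

/-- The generator `z_1` of 𝔡₁. -/
def zO : DOne := MonoidAlgebra.single (FreeMonoid.of false) 1

/-- The generator `ξ_1` of 𝔡₁. -/
def xiO : DOne := MonoidAlgebra.single (FreeMonoid.of true) 1

/-- `z_k` for a natural number index `k ≥ 1` (junk value `0` for `k = 0`). -/
def zOf (k : ℕ) : Dfree := if h : 0 < k then zL ⟨k, h⟩ else 0

/-- `ξ_k ∈ 𝔡_ξ` for a natural number index `k ≥ 1` (junk value `0` for `k = 0`). -/
def xiOf (k : ℕ) : DXi := if h : 0 < k then xiX ⟨k, h⟩ else 0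

/-- The canonical embedding `𝔡_ξ ↪ 𝔡`. -/
def toD (v : DXi) : Dfree := MonoidAlgebra.ofCoeff (Finsupp.mapDomain (FreeMonoid.map Sum.inr) v.coeff)

/-- The canonical embedding `𝔡₁ ↪ 𝔡` (`false ↦ z_1`, `true ↦ ξ_1`). -/
def toD1 (w : DOne) : Dfree :=
  MonoidAlgebra.ofCoeff
    (Finsupp.mapDomain (FreeMonoid.map fun b => if b then Sum.inr 1 else Sum.inl 1) w.coeff)

/-- `J_{z_k}(m) = q^{(k-1)m}/[m]^k` and `J_{ξ_k}(m) = q^{km}/[m]^k`. -/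
def Jlet (q : ℝ) : Letter → ℕ → ℝ
  | Sum.inl k, m => q ^ (((k : ℕ) - 1) * m) / qint q m ^ (k : ℕ)
  | Sum.inr k, m => q ^ ((k : ℕ) * m) / qint q m ^ (k : ℕ)

/-- `A_w(M) = Σ_{M > m_1 > ... > m_r > 0} J_{u_1}(m_1) ⋯ J_{u_r}(m_r)` for a word `w = u_1 ⋯ u_r`. -/
def AW (q : ℝ) (w : List Letter) (M : ℕ) : ℝ :=
  ∑ m ∈ (Fintype.piFinset fun _ : Fin w.length => Finset.Ioo 0 M).filter
      (fun m => ∀ i j, i < j → m j < m i),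
    ∏ j, Jlet q (w.get j) (m j)

/-- `A*_w(M) = Σ_{M > m_1 ≥ ... ≥ m_r ≥ 1} J_{u_1}(m_1) ⋯ J_{u_r}(m_r)` for a word `w = u_1 ⋯ u_r`. -/
def AstarW (q : ℝ) (w : List Letter) (M : ℕ) : ℝ :=
  ∑ m ∈ (Fintype.piFinset fun _ : Fin w.length => Finset.Ioo 0 M).filter
      (fun m => ∀ i j, i ≤ j → m j ≤ m i),
    ∏ j, Jlet q (w.get j) (m j)

/-- The ℤ-linear extension `A(M) : 𝔡 → ℝ`. -/
def Amap (q : ℝ) (x : Dfree) (M : ℕ) : ℝ :=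
  Finsupp.sum x.coeff fun w a => (a : ℝ) * AW q (FreeMonoid.toList w) M

/-- The ℤ-linear extension `A*(M) : 𝔡 → ℝ`. -/
def Astarmap (q : ℝ) (x : Dfree) (M : ℕ) : ℝ :=
  Finsupp.sum x.coeff fun w a => (a : ℝ) * AstarW q (FreeMonoid.toList w) M

/-- The map `ρ` on words:  `ρ(1,w) = w`, `ρ(v,1) = v`,
`ρ(ξ_k v, z_ℓ w) = ξ_k ρ(v, z_ℓ w) + z_ℓ ρ(ξ_k v, w) + z_{k+ℓ} ρ(v,w)`, and
`ρ(ξ_k v, ξ_ℓ w) = ξ_k ρ(v, ξ_ℓ w) + ξ_ℓ ρ(ξ_k v, w) + ξ_{k+ℓ} ρ(v,w)`. -/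
def rhoW : List ℕ+ → List Letter → Dfree
  | [], w => MonoidAlgebra.single (FreeMonoid.ofList w) 1
  | k :: v, [] => MonoidAlgebra.single (FreeMonoid.ofList ((k :: v).map Sum.inr)) 1
  | k :: v, Sum.inl l :: w =>
      xiL k * rhoW v (Sum.inl l :: w) + zL l * rhoW (k :: v) w + zL (k + l) * rhoW v w
  | k :: v, Sum.inr l :: w =>
      xiL k * rhoW v (Sum.inr l :: w) + xiL l * rhoW (k :: v) w + xiL (k + l) * rhoW v w
  termination_by v w => v.length + w.length

/-- The ℤ-bilinear map `ρ : 𝔡_ξ × 𝔡 → 𝔡`. -/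
def rho (v : DXi) (x : Dfree) : Dfree :=
  Finsupp.sum v.coeff fun vw a =>
    Finsupp.sum x.coeff fun xw b => (a * b) • rhoW (FreeMonoid.toList vw) (FreeMonoid.toList xw)

/-- `ξ_k ∘ ·` on words: `ξ_k ∘ 1 = 0` and `ξ_k ∘ (ξ_ℓ v) = ξ_{k+ℓ} v`. -/
def circW (k : ℕ+) : List ℕ+ → DXi
  | [] => 0
  | l :: v => MonoidAlgebra.single (FreeMonoid.ofList ((k + l) :: v)) 1

/-- The ℤ-linear map `ξ_k ∘ · : 𝔡_ξ → 𝔡_ξ`. -/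
def circ (k : ℕ+) (x : DXi) : DXi :=
  Finsupp.sum x.coeff fun w a => a • circW k (FreeMonoid.toList w)

/-- The map `d` on words: `d(1) = 1` and `d(ξ_k v) = ξ_k d(v) + ξ_k ∘ d(v)`. -/
def dW : List ℕ+ → DXi
  | [] => 1
  | k :: v => xiX k * dW v + circ k (dW v)

/-- The ℤ-linear map `d : 𝔡_ξ → 𝔡_ξ`. -/
def dmap (v : DXi) : DXi := Finsupp.sum v.coeff fun w a => a • dW (FreeMonoid.toList w)

/-- The maps `φ_s` on words of 𝔡₁: `φ_0 = id`, `φ_s(1) = ξ_1 z_1^{s-1}` for `s ≥ 1`,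
`φ_s(z_1 w) = z_1 φ_s(w) + ξ_1 Σ_{i=1}^{s} z_1^i φ_{s-i}(w)`, and
`φ_s(ξ_1 w) = ξ_1 Σ_{i=0}^{s} z_1^i φ_{s-i}(w)`. -/
def phiW : ℕ → List Bool → DOne
  | s, [] =>
      if s = 0 then 1
      else MonoidAlgebra.single (FreeMonoid.ofList (true :: List.replicate (s - 1) false)) 1
  | s, false :: w =>
      zO * phiW s w +
        ∑ i ∈ Finset.Icc 1 s, xiO * zO ^ i * phiW (s - i) w
  | s, true :: w =>
      ∑ i ∈ Finset.range (s + 1), xiO * zO ^ i * phiW (s - i) w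
  termination_by _ w => w.length

/-- The ℤ-linear maps `φ_s : 𝔡₁ → 𝔡₁`. -/
def phi (s : ℕ) (x : DOne) : DOne := Finsupp.sum x.coeff fun w a => a • phiW s (FreeMonoid.toList w)

/-- `Φ_0 = id` and `Φ_ℓ = Σ_{r=1}^{ℓ} (-1)^r Σ_{c ∈ I(r,ℓ)} φ_{c_1} ⋯ φ_{c_r}` for `ℓ ≥ 1`. -/
def PhiM : ℕ → DOne → DOne
  | 0 => id
  | l + 1 => fun x =>
      ∑ r ∈ Finset.Icc 1 (l + 1),
        (-1 : ℤ) ^ r •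
          ∑ c ∈ Ifin r (l + 1), ((List.ofFn fun j : Fin r => phi (c j)).foldr (· ∘ ·) id) x

/-- `Z_s(w) = Σ_{ℓ=0}^{s} ρ(d(ξ_1^{s-ℓ}), Φ_ℓ(w))`. -/
def Zmap (s : ℕ) (w : DOne) : Dfree :=
  ∑ l ∈ Finset.range (s + 1), rho (dmap (xiX 1 ^ (s - l))) (toD1 (PhiM l w))

/-- `ξ_k ∈ 𝔡` for natural `k` (junk `0` for `k = 0`). -/
def xiLN (k : ℕ) : Dfree := if h : 0 < k then xiL ⟨k, h⟩ else 0

/-- `d(ξ_1^a)` as a word-level object. -/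
def Dl (a : ℕ) : DXi := dW (List.replicate a 1)

@[simp] lemma rho_zero_left (x : Dfree) : rho 0 x = 0 := Finsupp.sum_zero_index

@[simp] lemma rho_zero_right (v : DXi) : rho v 0 = 0 := by
  simp [rho]

lemma rho_add_left (v v' : DXi) (x : Dfree) :
    rho (v + v') x = rho v x + rho v' x := by
  unfold rho
  rw [MonoidAlgebra.coeff_add]
  refine Finsupp.sum_add_index' (fun a => ?_) (fun a b₁ b₂ => ?_)
  · simp
  · have : (Finsupp.sum x.coeff fun xw c => ((b₁ + b₂) * c) • rhoW (FreeMonoid.toList a) (FreeMonoid.toList xw))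
        = Finsupp.sum x.coeff fun xw c => (b₁ * c) • rhoW (FreeMonoid.toList a) (FreeMonoid.toList xw)
          + (b₂ * c) • rhoW (FreeMonoid.toList a) (FreeMonoid.toList xw) :=
      Finsupp.sum_congr fun xw _ => by rw [add_mul, add_smul]
    exact this.trans Finsupp.sum_add

lemma rho_add_right (v : DXi) (x x' : Dfree) :
    rho v (x + x') = rho v x + rho v x' := by
  unfold rho
  simp only [MonoidAlgebra.coeff_add]
  rw [← Finsupp.sum_add]
  refine Finsupp.sum_congr fun vw _ => ?_
  exact Finsupp.sum_add_index' (fun a => by simp) (fun a b₁ b₂ => by rw [mul_add, add_smul])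

lemma rho_single_single (vw : FreeMonoid ℕ+) (xw : FreeMonoid Letter) (a b : ℤ) :
    rho (MonoidAlgebra.single vw a) (MonoidAlgebra.single xw b)
      = (a * b) • rhoW (FreeMonoid.toList vw) (FreeMonoid.toList xw) := by
  unfold rho
  rw [MonoidAlgebra.coeff_single, MonoidAlgebra.coeff_single,
    Finsupp.sum_single_index (by simp), Finsupp.sum_single_index (by simp)]

def rhoL (y : Dfree) : DXi →+ Dfree :=
  AddMonoidHom.mk' (fun v => rho v y) (fun a b => rho_add_left a b y)

lemma rho_sum_left {ι : Type*} (s : Finset ι) (f : ι → DXi) (y : Dfree) :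
    rho (∑ i ∈ s, f i) y = ∑ i ∈ s, rho (f i) y :=
  map_sum (rhoL y) f s

lemma xiX_mul_single (k : ℕ+) (w : FreeMonoid ℕ+) (b : ℤ) :
    xiX k * MonoidAlgebra.single w b = MonoidAlgebra.single (FreeMonoid.of k * w) b := by
  simp [xiX, MonoidAlgebra.single_mul_single]

lemma zL_mul_single (l : ℕ+) (w : FreeMonoid Letter) (b : ℤ) :
    zL l * MonoidAlgebra.single w b
      = MonoidAlgebra.single (FreeMonoid.of (Sum.inl l) * w) b := by
  simp [zL, MonoidAlgebra.single_mul_single]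

lemma xiL_mul_single (l : ℕ+) (w : FreeMonoid Letter) (b : ℤ) :
    xiL l * MonoidAlgebra.single w b
      = MonoidAlgebra.single (FreeMonoid.of (Sum.inr l) * w) b := by
  simp [xiL, MonoidAlgebra.single_mul_single]

@[simp] lemma toList_of_mul {α : Type*} (a : α) (w : FreeMonoid α) :
    FreeMonoid.toList (FreeMonoid.of a * w) = a :: FreeMonoid.toList w := by
  simp

@[simp] lemma rho_one_left (y : Dfree) : rho 1 y = y := by
  have h1 : (1 : DXi) = MonoidAlgebra.single 1 1 := rfl
  rw [h1]
  unfold rho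
  rw [MonoidAlgebra.coeff_single, Finsupp.sum_single_index]
  · have : ∀ (xw : FreeMonoid Letter) (b : ℤ),
        (1 * b) • rhoW (FreeMonoid.toList (1 : FreeMonoid ℕ+)) (FreeMonoid.toList xw)
          = MonoidAlgebra.single xw b := by
      intro xw b
      have : FreeMonoid.toList (1 : FreeMonoid ℕ+) = [] := rfl
      rw [this, one_mul]
      show b • rhoW [] (FreeMonoid.toList xw) = _
      rw [rhoW]
      simp [MonoidAlgebra.smul_single]
    rw [Finsupp.sum_congr (fun xw _ => this xw (y.coeff xw))]
    exact MonoidAlgebra.sum_coeff_single y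
  · simp

lemma rho_xi_z (k l : ℕ+) (v : DXi) (y : Dfree) :
    rho (xiX k * v) (zL l * y)
      = xiL k * rho v (zL l * y) + zL l * rho (xiX k * v) y + zL (k + l) * rho v y := by
  induction v using MonoidAlgebra.induction_linear with
  | zero => simp
  | add f g hf hg =>
    rw [mul_add, rho_add_left, rho_add_left, rho_add_left, rho_add_left, hf, hg]
    simp only [mul_add]
    abel
  | single vw a =>
    induction y using MonoidAlgebra.induction_linear with
    | zero => simp
    | add f g hf hg =>
      rw [mul_add, rho_add_right, rho_add_right, rho_add_right, rho_add_right, hf, hg]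
      simp only [mul_add]
      abel
    | single xw b =>
      rw [xiX_mul_single, zL_mul_single, rho_single_single, rho_single_single,
        rho_single_single, rho_single_single, toList_of_mul, toList_of_mul]
      rw [show rhoW (k :: FreeMonoid.toList vw) (Sum.inl l :: FreeMonoid.toList xw)
            = xiL k * rhoW (FreeMonoid.toList vw) (Sum.inl l :: FreeMonoid.toList xw)
              + zL l * rhoW (k :: FreeMonoid.toList vw) (FreeMonoid.toList xw)
              + zL (k + l) * rhoW (FreeMonoid.toList vw) (FreeMonoid.toList xw) from by
          rw [rhoW]]
      rw [smul_add, smul_add, mul_smul_comm, mul_smul_comm, mul_smul_comm]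

lemma rho_xi_xi (k l : ℕ+) (v : DXi) (y : Dfree) :
    rho (xiX k * v) (xiL l * y)
      = xiL k * rho v (xiL l * y) + xiL l * rho (xiX k * v) y + xiL (k + l) * rho v y := by
  induction v using MonoidAlgebra.induction_linear with
  | zero => simp
  | add f g hf hg =>
    rw [mul_add, rho_add_left, rho_add_left, rho_add_left, rho_add_left, hf, hg]
    simp only [mul_add]
    abel
  | single vw a =>
    induction y using MonoidAlgebra.induction_linear with
    | zero => simp
    | add f g hf hg =>
      rw [mul_add, rho_add_right, rho_add_right, rho_add_right, rho_add_right, hf, hg]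
      simp only [mul_add]
      abel
    | single xw b =>
      rw [xiX_mul_single, xiL_mul_single, rho_single_single, rho_single_single,
        rho_single_single, rho_single_single, toList_of_mul, toList_of_mul]
      rw [show rhoW (k :: FreeMonoid.toList vw) (Sum.inr l :: FreeMonoid.toList xw)
            = xiL k * rhoW (FreeMonoid.toList vw) (Sum.inr l :: FreeMonoid.toList xw)
              + xiL l * rhoW (k :: FreeMonoid.toList vw) (FreeMonoid.toList xw)
              + xiL (k + l) * rhoW (FreeMonoid.toList vw) (FreeMonoid.toList xw) from by
          rw [rhoW]]
      rw [smul_add, smul_add, mul_smul_comm, mul_smul_comm, mul_smul_comm]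

/-! circ and d lemmas -/

@[simp] lemma circ_zero (k : ℕ+) : circ k 0 = 0 := Finsupp.sum_zero_index

lemma circ_add (k : ℕ+) (v v' : DXi) : circ k (v + v') = circ k v + circ k v' := by
  unfold circ; rw [MonoidAlgebra.coeff_add]; exact Finsupp.sum_add_index' (fun _ => by simp) (fun _ b₁ b₂ => by rw [add_smul])

def circL (k : ℕ+) : DXi →+ DXi := AddMonoidHom.mk' (circ k) (circ_add k)

lemma circ_sum {ι : Type*} (k : ℕ+) (s : Finset ι) (f : ι → DXi) :
    circ k (∑ i ∈ s, f i) = ∑ i ∈ s, circ k (f i) := map_sum (circL k) f s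

@[simp] lemma circ_one (k : ℕ+) : circ k 1 = 0 := by
  show circ k (MonoidAlgebra.single 1 1) = 0
  unfold circ
  rw [MonoidAlgebra.coeff_single, Finsupp.sum_single_index (by simp)]
  have h : FreeMonoid.toList (1 : FreeMonoid ℕ+) = [] := rfl
  rw [h, circW]
  simp

lemma ofList_cons (a : ℕ+) (l : List ℕ+) :
    FreeMonoid.ofList (a :: l) = FreeMonoid.of a * FreeMonoid.ofList l := rfl

lemma ofList_cons' {α : Type*} (a : α) (l : List α) :
    FreeMonoid.ofList (a :: l) = FreeMonoid.of a * FreeMonoid.ofList l := rfl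

lemma circ_xi_mul (k l : ℕ+) (v : DXi) : circ k (xiX l * v) = xiX (k + l) * v := by
  induction v using MonoidAlgebra.induction_linear with
  | zero => simp
  | add f g hf hg => rw [mul_add, circ_add, hf, hg, mul_add]
  | single vw a =>
    rw [xiX_mul_single, xiX_mul_single]
    unfold circ
    rw [MonoidAlgebra.coeff_single, Finsupp.sum_single_index (by simp), toList_of_mul, circW,
      ofList_cons, FreeMonoid.ofList_toList]
    simp [xiX, MonoidAlgebra.single_mul_single, MonoidAlgebra.smul_single]

@[simp] lemma Dl_zero : Dl 0 = 1 := rfl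

lemma Dl_succ (a : ℕ) : Dl (a + 1) = xiX 1 * Dl a + circ 1 (Dl a) := by
  rw [Dl, List.replicate_succ, dW]; rfl

lemma xiOf_succ (j : ℕ) : xiOf (j + 1) = xiX j.succPNat := by
  unfold xiOf; exact dif_pos j.succ_pos

@[simp] lemma xiOf_zero : xiOf 0 = 0 := by rw [xiOf, dif_neg]; omega

@[simp] lemma xiLN_zero : xiLN 0 = 0 := by rw [xiLN, dif_neg]; omega

lemma xiOf_one : xiOf 1 = xiX 1 := by
  rw [xiOf_succ]; congr 1

lemma circ_one_xi (j : ℕ) (v : DXi) :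
    circ 1 (xiOf (j + 1) * v) = xiOf (j + 2) * v := by
  rw [xiOf_succ, xiOf_succ, circ_xi_mul]
  have : (1 + j.succPNat) = (j + 1).succPNat :=
    PNat.eq (by rw [PNat.add_coe, Nat.succPNat_coe, Nat.succPNat_coe, PNat.one_coe]; omega)
  rw [this]

lemma Dl_decomp (n : ℕ) :
    Dl (n + 1) = ∑ k ∈ Finset.range (n + 2), xiOf k * Dl (n + 1 - k) := by
  induction n with
  | zero =>
    rw [Dl_succ, Dl_zero, circ_one]
    rw [Finset.sum_range_succ, Finset.sum_range_succ, Finset.range_zero, Finset.sum_empty]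
    simp [xiOf_one]
  | succ m ih =>
    rw [Dl_succ, ih, circ_sum]
    have hc : ∀ j ∈ Finset.range (m + 1),
        circ 1 (xiOf (j + 1) * Dl (m + 1 - (j + 1))) = xiOf (j + 2) * Dl (m - j) := by
      intro j _
      rw [circ_one_xi, Nat.succ_sub_succ]
    rw [Finset.sum_range_succ' (fun k => circ 1 (xiOf k * Dl (m + 1 - k))) (m + 1)]
    rw [Finset.sum_congr rfl hc]
    simp only [xiOf_zero, zero_mul, circ_zero, add_zero]
    rw [Finset.sum_range_succ' (fun k => xiOf k * Dl (m + 2 - k)) (m + 2)]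
    simp only [xiOf_zero, zero_mul, add_zero, Nat.succ_sub_succ]
    rw [Finset.sum_range_succ' (fun j => xiOf (j + 1) * Dl (m + 1 - j)) (m + 1)]
    simp only [Nat.succ_sub_succ, Nat.sub_zero, xiOf_one]
    rw [← ih]
    simp only [show (0:ℕ)+1 = 1 from rfl, show ∀ x:ℕ, x+1+1 = x+2 from fun _ => rfl, xiOf_one]
    abel

lemma zOf_one : zOf 1 = zL 1 := by
  rw [zOf, dif_pos Nat.one_pos]
  exact congrArg zL (Subtype.ext rfl)

lemma xiLN_succ (j : ℕ) : xiLN (j + 1) = xiL j.succPNat := by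
  unfold xiLN; exact dif_pos j.succ_pos

lemma xiLN_one : xiLN 1 = xiL 1 := by
  rw [xiLN, dif_pos Nat.one_pos]
  exact congrArg xiL (Subtype.ext rfl)

lemma zOf_succ (j : ℕ) : zOf (j + 1) = zL j.succPNat := by
  unfold zOf; exact dif_pos j.succ_pos

lemma rho_nat_xi_z (j : ℕ) (v : DXi) (y : Dfree) :
    rho (xiOf (j + 1) * v) (zL 1 * y)
      = xiLN (j + 1) * rho v (zL 1 * y) + zL 1 * rho (xiOf (j + 1) * v) y
        + zOf (j + 2) * rho v y := by
  rw [xiOf_succ, xiLN_succ, zOf_succ, rho_xi_z]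
  have : (j.succPNat + 1) = (j + 1).succPNat :=
    PNat.eq (by rw [PNat.add_coe, Nat.succPNat_coe, Nat.succPNat_coe, PNat.one_coe])
  rw [this]

lemma rho_nat_xi_xi (j : ℕ) (v : DXi) (y : Dfree) :
    rho (xiOf (j + 1) * v) (xiL 1 * y)
      = xiLN (j + 1) * rho v (xiL 1 * y) + xiL 1 * rho (xiOf (j + 1) * v) y
        + xiLN (j + 2) * rho v y := by
  rw [xiOf_succ, xiLN_succ, xiLN_succ, rho_xi_xi]
  have : (j.succPNat + 1) = (j + 1).succPNat :=
    PNat.eq (by rw [PNat.add_coe, Nat.succPNat_coe, Nat.succPNat_coe, PNat.one_coe])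
  rw [this]

lemma rho_D_z (a : ℕ) (y : Dfree) :
    rho (Dl a) (zL 1 * y)
      = ∑ k ∈ Finset.range (a + 1), xiLN k * rho (Dl (a - k)) (zL 1 * y)
        + ∑ k ∈ Finset.range (a + 1), zOf (k + 1) * rho (Dl (a - k)) y := by
  cases a with
  | zero =>
    simp only [Finset.range_one, Finset.sum_singleton, xiLN_zero, zero_mul, Nat.sub_zero,
      Dl_zero, rho_one_left, zero_add, zOf_one]
  | succ n =>
    have hsum : ∀ z : Dfree, rho (Dl (n + 1)) z
        = ∑ j ∈ Finset.range (n + 1), rho (xiOf (j + 1) * Dl (n - j)) z := by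
      intro z
      rw [Dl_decomp, rho_sum_left,
        Finset.sum_range_succ' (fun k => rho (xiOf k * Dl (n + 1 - k)) z) (n + 1)]
      simp only [xiOf_zero, zero_mul, rho_zero_left, add_zero, Nat.succ_sub_succ]
    rw [hsum (zL 1 * y)]
    have hterm : ∀ j ∈ Finset.range (n + 1),
        rho (xiOf (j + 1) * Dl (n - j)) (zL 1 * y)
          = xiLN (j + 1) * rho (Dl (n - j)) (zL 1 * y)
            + zL 1 * rho (xiOf (j + 1) * Dl (n - j)) y
            + zOf (j + 2) * rho (Dl (n - j)) y := fun j _ => rho_nat_xi_z j _ y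
    rw [Finset.sum_congr rfl hterm, Finset.sum_add_distrib, Finset.sum_add_distrib]
    rw [← Finset.mul_sum, ← hsum y]
    rw [Finset.sum_range_succ' (fun k => xiLN k * rho (Dl (n + 1 - k)) (zL 1 * y)) (n + 1),
      Finset.sum_range_succ' (fun k => zOf (k + 1) * rho (Dl (n + 1 - k)) y) (n + 1)]
    simp only [xiLN_zero, zero_mul, add_zero, Nat.succ_sub_succ, Nat.sub_zero,
      show (0:ℕ)+1 = 1 from rfl, show ∀ x:ℕ, x+1+1 = x+2 from fun _ => rfl, zOf_one]
    abel

lemma rho_D_xi (a : ℕ) (y : Dfree) :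
    rho (Dl a) (xiL 1 * y)
      = ∑ k ∈ Finset.range (a + 1), xiLN k * rho (Dl (a - k)) (xiL 1 * y)
        + ∑ k ∈ Finset.range (a + 1), xiLN (k + 1) * rho (Dl (a - k)) y := by
  cases a with
  | zero =>
    simp only [Finset.range_one, Finset.sum_singleton, xiLN_zero, zero_mul, Nat.sub_zero,
      Dl_zero, rho_one_left, zero_add, xiLN_one]
  | succ n =>
    have hsum : ∀ z : Dfree, rho (Dl (n + 1)) z
        = ∑ j ∈ Finset.range (n + 1), rho (xiOf (j + 1) * Dl (n - j)) z := by
      intro z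
      rw [Dl_decomp, rho_sum_left,
        Finset.sum_range_succ' (fun k => rho (xiOf k * Dl (n + 1 - k)) z) (n + 1)]
      simp only [xiOf_zero, zero_mul, rho_zero_left, add_zero, Nat.succ_sub_succ]
    rw [hsum (xiL 1 * y)]
    have hterm : ∀ j ∈ Finset.range (n + 1),
        rho (xiOf (j + 1) * Dl (n - j)) (xiL 1 * y)
          = xiLN (j + 1) * rho (Dl (n - j)) (xiL 1 * y)
            + xiL 1 * rho (xiOf (j + 1) * Dl (n - j)) y
            + xiLN (j + 2) * rho (Dl (n - j)) y := fun j _ => rho_nat_xi_xi j _ y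
    rw [Finset.sum_congr rfl hterm, Finset.sum_add_distrib, Finset.sum_add_distrib]
    rw [← Finset.mul_sum, ← hsum y]
    rw [Finset.sum_range_succ' (fun k => xiLN k * rho (Dl (n + 1 - k)) (xiL 1 * y)) (n + 1),
      Finset.sum_range_succ' (fun k => xiLN (k + 1) * rho (Dl (n + 1 - k)) y) (n + 1)]
    simp only [xiLN_zero, zero_mul, add_zero, Nat.succ_sub_succ, Nat.sub_zero,
      show (0:ℕ)+1 = 1 from rfl, show ∀ x:ℕ, x+1+1 = x+2 from fun _ => rfl, xiLN_one]
    abel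

/-! phi lemmas -/

lemma phi_add (s : ℕ) (x y : DOne) : phi s (x + y) = phi s x + phi s y := by
  unfold phi; rw [MonoidAlgebra.coeff_add]; exact Finsupp.sum_add_index' (fun _ => by simp) (fun _ b₁ b₂ => by rw [add_smul])

@[simp] lemma phi_zero_right (s : ℕ) : phi s 0 = 0 := Finsupp.sum_zero_index

def phiH (s : ℕ) : DOne →+ DOne := AddMonoidHom.mk' (phi s) (phi_add s)

lemma phi_single (s : ℕ) (w : FreeMonoid Bool) (a : ℤ) :
    phi s (MonoidAlgebra.single w a) = a • phiW s (FreeMonoid.toList w) := by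
  unfold phi; rw [MonoidAlgebra.coeff_single]; exact Finsupp.sum_single_index (by simp)

lemma phiW_zero (l : List Bool) : phiW 0 l = MonoidAlgebra.single (FreeMonoid.ofList l) 1 := by
  induction l with
  | nil => rw [phiW]; rfl
  | cons b l ih =>
    cases b
    · rw [phiW, ih]
      simp only [Finset.Icc_self, Finset.Icc_eq_empty_of_lt Nat.zero_lt_one]
      rw [Finset.sum_empty, add_zero, ofList_cons']
      show zO * _ = _
      rw [zO, MonoidAlgebra.single_mul_single, one_mul]
    · rw [phiW, Finset.range_one, Finset.sum_singleton, pow_zero, mul_one,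
        show (0:ℕ) - 0 = 0 from rfl, ih, ofList_cons']
      show xiO * _ = _
      rw [xiO, MonoidAlgebra.single_mul_single, one_mul]

lemma phi_zero_eq (x : DOne) : phi 0 x = x := by
  unfold phi
  have : ∀ (w : FreeMonoid Bool) (a : ℤ),
      a • phiW 0 (FreeMonoid.toList w) = MonoidAlgebra.single w a := by
    intro w a
    rw [phiW_zero, FreeMonoid.ofList_toList]
    simp [MonoidAlgebra.smul_single]
  rw [Finsupp.sum_congr (fun w _ => this w (x.coeff w))]
  exact MonoidAlgebra.sum_coeff_single x

lemma zO_mul_single (w : FreeMonoid Bool) (b : ℤ) :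
    zO * MonoidAlgebra.single w b = MonoidAlgebra.single (FreeMonoid.of false * w) b := by
  simp [zO, MonoidAlgebra.single_mul_single]

lemma xiO_mul_single (w : FreeMonoid Bool) (b : ℤ) :
    xiO * MonoidAlgebra.single w b = MonoidAlgebra.single (FreeMonoid.of true * w) b := by
  simp [xiO, MonoidAlgebra.single_mul_single]

lemma phi_z (s : ℕ) (x : DOne) :
    phi s (zO * x) = zO * phi s x + ∑ i ∈ Finset.Icc 1 s, xiO * zO ^ i * phi (s - i) x := by
  induction x using MonoidAlgebra.induction_linear with
  | zero => simp
  | add f g hf hg =>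
    rw [mul_add, phi_add, hf, hg]
    have hsum : ∑ i ∈ Finset.Icc 1 s, xiO * zO ^ i * phi (s - i) (f + g)
        = ∑ i ∈ Finset.Icc 1 s, (xiO * zO ^ i * phi (s - i) f + xiO * zO ^ i * phi (s - i) g) :=
      Finset.sum_congr rfl fun i _ => by rw [phi_add, mul_add]
    rw [hsum, Finset.sum_add_distrib, phi_add s f g, mul_add]
    abel
  | single w a =>
    rw [zO_mul_single, phi_single, phi_single, toList_of_mul, phiW]
    rw [smul_add, Finset.smul_sum]
    congr 1
    · rw [mul_smul_comm]
    · exact Finset.sum_congr rfl fun i _ => by rw [phi_single, mul_smul_comm]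

lemma phi_xi (s : ℕ) (x : DOne) :
    phi s (xiO * x) = ∑ i ∈ Finset.range (s + 1), xiO * zO ^ i * phi (s - i) x := by
  induction x using MonoidAlgebra.induction_linear with
  | zero => simp
  | add f g hf hg =>
    rw [mul_add, phi_add, hf, hg]
    have hsum : ∑ i ∈ Finset.range (s + 1), xiO * zO ^ i * phi (s - i) (f + g)
        = ∑ i ∈ Finset.range (s + 1), (xiO * zO ^ i * phi (s - i) f + xiO * zO ^ i * phi (s - i) g) :=
      Finset.sum_congr rfl fun i _ => by rw [phi_add, mul_add]
    rw [hsum, Finset.sum_add_distrib]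
  | single w a =>
    rw [xiO_mul_single, phi_single, toList_of_mul, phiW]
    rw [Finset.smul_sum]
    exact Finset.sum_congr rfl fun i _ => by rw [phi_single, mul_smul_comm]

/-! comp, Ifin, PhiM -/

def comp {r : ℕ} (c : Fin r → ℕ) : DOne → DOne :=
  (List.ofFn fun j : Fin r => phi (c j)).foldr (· ∘ ·) id

lemma comp_zero_fn (c : Fin 0 → ℕ) : comp c = id := by
  simp [comp, List.ofFn_zero]

lemma comp_cons (c : Fin (r + 1) → ℕ) : comp c = phi (c 0) ∘ comp (Fin.tail c) := by
  rw [comp, List.ofFn_succ]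
  rfl

lemma foldr_comp_eq (l : List (DOne → DOne)) (g : DOne → DOne) :
    l.foldr (· ∘ ·) g = l.foldr (· ∘ ·) id ∘ g := by
  induction l with
  | nil => rfl
  | cons a l ih =>
    simp only [List.foldr_cons, ih]
    rfl

lemma comp_snoc {r : ℕ} (c : Fin r → ℕ) (m : ℕ) :
    comp (Fin.snoc c m) = comp c ∘ phi m := by
  rw [comp, List.ofFn_succ']
  simp only [Fin.snoc_castSucc, Fin.snoc_last]
  rw [List.concat_eq_append, List.foldr_append]
  show _ = comp c ∘ phi m
  rw [List.foldr_cons, List.foldr_nil, foldr_comp_eq]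
  rfl

lemma comp_add {r : ℕ} (c : Fin r → ℕ) (x y : DOne) :
    comp c (x + y) = comp c x + comp c y := by
  induction r with
  | zero => rw [comp_zero_fn]; rfl
  | succ r ih =>
    rw [comp_cons]
    show phi (c 0) (comp (Fin.tail c) (x + y)) = _
    rw [ih, phi_add]
    rfl

lemma comp_zero_right {r : ℕ} (c : Fin r → ℕ) : comp c 0 = 0 := by
  induction r with
  | zero => rw [comp_zero_fn]; rfl
  | succ r ih =>
    rw [comp_cons]
    show phi (c 0) (comp (Fin.tail c) 0) = _
    rw [ih, phi_zero_right]

lemma mem_Ifin {r n : ℕ} {c : Fin r → ℕ} :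
    c ∈ Ifin r n ↔ (∀ i, 1 ≤ c i) ∧ ∑ i, c i = n := by
  simp only [Ifin, Finset.mem_filter, Fintype.mem_piFinset, Finset.mem_Icc]
  constructor
  · rintro ⟨h1, h2⟩
    exact ⟨fun i => (h1 i).1, h2⟩
  · rintro ⟨h1, h2⟩
    refine ⟨fun i => ⟨h1 i, ?_⟩, h2⟩
    calc c i ≤ ∑ j, c j :=
          Finset.single_le_sum (fun j _ => Nat.zero_le _) (Finset.mem_univ i)
      _ = n := h2

lemma Ifin_zero_eq (n : ℕ) (hn : n ≠ 0) : Ifin 0 n = ∅ := by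
  ext c
  simp only [mem_Ifin, Finset.notMem_empty, iff_false, not_and]
  intro _
  simp only [Finset.univ_eq_empty, Finset.sum_empty]
  omega

lemma Ifin_empty_of_lt {r n : ℕ} (h : n < r) : Ifin r n = ∅ := by
  ext c
  simp only [mem_Ifin, Finset.notMem_empty, iff_false, not_and]
  intro h1 hs
  have : (r : ℕ) ≤ ∑ i, c i := by
    calc (r : ℕ) = ∑ _i : Fin r, 1 := by simp
      _ ≤ ∑ i, c i := Finset.sum_le_sum fun i _ => h1 i
  omega

lemma Ifin_zero_zero : Ifin 0 0 = {(Fin.elim0 : Fin 0 → ℕ)} := by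
  ext c
  simp only [mem_Ifin, Finset.mem_singleton]
  constructor
  · intro _
    funext i
    exact i.elim0
  · intro _
    constructor
    · intro i; exact i.elim0
    · simp

lemma PhiM_eq (n : ℕ) (x : DOne) :
    PhiM n x = ∑ r ∈ Finset.range (n + 1), (-1 : ℤ) ^ r • ∑ c ∈ Ifin r n, comp c x := by
  cases n with
  | zero =>
    rw [Finset.range_one, Finset.sum_singleton, pow_zero, one_smul, Ifin_zero_zero,
      Finset.sum_singleton, comp_zero_fn]
    rfl
  | succ l =>
    show (∑ r ∈ Finset.Icc 1 (l + 1), (-1 : ℤ) ^ r • ∑ c ∈ Ifin r (l + 1), comp c x) = _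
    have hins : Finset.range (l + 2) = insert 0 (Finset.Icc 1 (l + 1)) := by
      ext k
      simp only [Finset.mem_range, Finset.mem_insert, Finset.mem_Icc]
      omega
    rw [hins, Finset.sum_insert (by simp)]
    rw [Ifin_zero_eq (l + 1) (by omega), Finset.sum_empty, smul_zero, zero_add]

lemma peel_last {M : Type*} [AddCommMonoid M] (r n : ℕ) (F : (Fin (r + 1) → ℕ) → M) :
    ∑ c ∈ Ifin (r + 1) n, F c
      = ∑ m ∈ Finset.range n, ∑ c ∈ Ifin r (n - (m + 1)), F (Fin.snoc c (m + 1)) := by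
  rw [← Finset.sum_sigma (Finset.range n) (fun m => Ifin r (n - (m + 1)))
    (fun p => F (Fin.snoc p.2 (p.1 + 1)))]
  refine Finset.sum_nbij' (fun c => ⟨c (Fin.last r) - 1, Fin.init c⟩)
    (fun p => Fin.snoc p.2 (p.1 + 1)) ?_ ?_ ?_ ?_ ?_
  · intro c hc
    obtain ⟨h1, h2⟩ := mem_Ifin.mp hc
    have hsum : ∑ i : Fin r, Fin.init c i + c (Fin.last r) = n := by
      rw [← h2, Fin.sum_univ_castSucc (f := c)]
      rfl
    have hlast : 1 ≤ c (Fin.last r) := h1 _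
    have hle : c (Fin.last r) ≤ n := by omega
    refine Finset.mem_sigma.mpr ⟨Finset.mem_range.mpr
      (show c (Fin.last r) - 1 < n by omega), ?_⟩
    exact mem_Ifin.mpr ⟨fun i => h1 _,
      show ∑ i : Fin r, Fin.init c i = n - (c (Fin.last r) - 1 + 1) by omega⟩
  · rintro ⟨m, c⟩ hp
    rw [Finset.mem_sigma, Finset.mem_range, mem_Ifin] at hp
    obtain ⟨hm, h1, h2⟩ := hp
    dsimp only at h1 h2 hm ⊢
    rw [mem_Ifin]
    constructor
    · intro i
      rcases Fin.eq_castSucc_or_eq_last i with ⟨j, rfl⟩ | rfl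
      · rw [Fin.snoc_castSucc]; exact h1 j
      · rw [Fin.snoc_last]; omega
    · rw [Fin.sum_univ_castSucc]
      simp only [Fin.snoc_castSucc, Fin.snoc_last]
      omega
  · intro c hc
    obtain ⟨h1, h2⟩ := mem_Ifin.mp hc
    have hlast : 1 ≤ c (Fin.last r) := h1 _
    have h3 : c (Fin.last r) - 1 + 1 = c (Fin.last r) := by omega
    show Fin.snoc (Fin.init c) (c (Fin.last r) - 1 + 1) = c
    rw [h3]
    exact Fin.snoc_init_self c
  · rintro ⟨m, c⟩ hp
    dsimp only
    rw [Fin.snoc_last, Fin.init_snoc]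
    simp
  · intro c hc
    obtain ⟨h1, h2⟩ := mem_Ifin.mp hc
    have hlast : 1 ≤ c (Fin.last r) := h1 _
    have h3 : c (Fin.last r) - 1 + 1 = c (Fin.last r) := by omega
    show F c = F (Fin.snoc (Fin.init c) (c (Fin.last r) - 1 + 1))
    rw [h3, Fin.snoc_init_self c]

lemma peel_first {M : Type*} [AddCommMonoid M] (r n : ℕ) (F : (Fin (r + 1) → ℕ) → M) :
    ∑ c ∈ Ifin (r + 1) n, F c
      = ∑ m ∈ Finset.range n, ∑ c ∈ Ifin r (n - (m + 1)), F (Fin.cons (m + 1) c) := by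
  rw [← Finset.sum_sigma (Finset.range n) (fun m => Ifin r (n - (m + 1)))
    (fun p => F (Fin.cons (p.1 + 1) p.2))]
  refine Finset.sum_nbij' (fun c => ⟨c 0 - 1, Fin.tail c⟩)
    (fun p => Fin.cons (p.1 + 1) p.2) ?_ ?_ ?_ ?_ ?_
  · intro c hc
    obtain ⟨h1, h2⟩ := mem_Ifin.mp hc
    have hsum : c 0 + ∑ i : Fin r, Fin.tail c i = n := by
      rw [← h2, Fin.sum_univ_succ (f := c)]
      rfl
    have hfirst : 1 ≤ c 0 := h1 _
    have hle : c 0 ≤ n := by omega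
    refine Finset.mem_sigma.mpr ⟨Finset.mem_range.mpr
      (show c 0 - 1 < n by omega), ?_⟩
    exact mem_Ifin.mpr ⟨fun i => h1 _,
      show ∑ i : Fin r, Fin.tail c i = n - (c 0 - 1 + 1) by omega⟩
  · rintro ⟨m, c⟩ hp
    rw [Finset.mem_sigma, Finset.mem_range, mem_Ifin] at hp
    obtain ⟨hm, h1, h2⟩ := hp
    dsimp only at h1 h2 hm ⊢
    rw [mem_Ifin]
    constructor
    · intro i
      rcases Fin.eq_zero_or_eq_succ i with rfl | ⟨j, rfl⟩
      · rw [Fin.cons_zero]; omega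
      · rw [Fin.cons_succ]; exact h1 j
    · rw [Fin.sum_univ_succ]
      simp only [Fin.cons_zero, Fin.cons_succ]
      omega
  · intro c hc
    obtain ⟨h1, h2⟩ := mem_Ifin.mp hc
    have hfirst : 1 ≤ c 0 := h1 _
    have h3 : c 0 - 1 + 1 = c 0 := by omega
    show Fin.cons (c 0 - 1 + 1) (Fin.tail c) = c
    rw [h3]
    exact Fin.cons_self_tail c
  · rintro ⟨m, c⟩ hp
    dsimp only
    rw [Fin.cons_zero, Fin.tail_cons]
    simp
  · intro c hc
    obtain ⟨h1, h2⟩ := mem_Ifin.mp hc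
    have hfirst : 1 ≤ c 0 := h1 _
    have h3 : c 0 - 1 + 1 = c 0 := by omega
    show F c = F (Fin.cons (c 0 - 1 + 1) (Fin.tail c))
    rw [h3, Fin.cons_self_tail c]

lemma PhiM_add (n : ℕ) (x y : DOne) : PhiM n (x + y) = PhiM n x + PhiM n y := by
  rw [PhiM_eq, PhiM_eq, PhiM_eq, ← Finset.sum_add_distrib]
  refine Finset.sum_congr rfl fun r _ => ?_
  rw [← smul_add, ← Finset.sum_add_distrib]
  exact congrArg _ (Finset.sum_congr rfl fun c _ => comp_add c x y)

lemma PhiM_zero_right (n : ℕ) : PhiM n 0 = 0 := by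
  rw [PhiM_eq]
  refine Finset.sum_eq_zero fun r _ => ?_
  rw [Finset.sum_eq_zero fun c _ => comp_zero_right c, smul_zero]

def PhiMH (n : ℕ) : DOne →+ DOne := AddMonoidHom.mk' (PhiM n) (PhiM_add n)

lemma sum_range_reflect' {M : Type*} [AddCommMonoid M] (n : ℕ) (f : ℕ → M) :
    ∑ j ∈ Finset.range (n + 1), f (n - j) = ∑ j ∈ Finset.range (n + 1), f j := by
  have h := Finset.sum_range_reflect f (n + 1)
  simpa using h

lemma C1a (s : ℕ) (x : DOne) :
    ∑ m ∈ Finset.range (s + 1), PhiM (s - m) (phi m x) = if s = 0 then x else 0 := by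
  cases s with
  | zero =>
    rw [if_pos rfl, Finset.range_one, Finset.sum_singleton, phi_zero_eq]
    rfl
  | succ t =>
    rw [if_neg (Nat.succ_ne_zero t)]
    rw [Finset.sum_range_succ' (fun m => PhiM (t + 1 - m) (phi m x)) (t + 1)]
    simp only [Nat.succ_sub_succ, Nat.sub_zero, phi_zero_eq]
    have hPhi : PhiM (t + 1) x = -∑ j ∈ Finset.range (t + 1), PhiM (t - j) (phi (j + 1) x) := by
      rw [PhiM_eq]
      rw [Finset.sum_range_succ' (fun r => (-1 : ℤ) ^ r • ∑ c ∈ Ifin r (t + 1), comp c x) (t + 1)]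
      rw [Ifin_zero_eq _ (Nat.succ_ne_zero t), Finset.sum_empty, smul_zero, add_zero]
      have h1 : ∀ r' ∈ Finset.range (t + 1),
          (-1 : ℤ) ^ (r' + 1) • ∑ c ∈ Ifin (r' + 1) (t + 1), comp c x
            = -∑ m ∈ Finset.range (t + 1),
                (-1 : ℤ) ^ r' • ∑ c ∈ Ifin r' (t - m), comp c (phi (m + 1) x) := by
        intro r' _
        rw [peel_last r' (t + 1)]
        have h0 : ∀ m ∈ Finset.range (t + 1),
            ∑ c ∈ Ifin r' (t + 1 - (m + 1)), comp (Fin.snoc c (m + 1)) x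
              = ∑ c ∈ Ifin r' (t - m), comp c (phi (m + 1) x) := by
          intro m _
          rw [Nat.succ_sub_succ]
          exact Finset.sum_congr rfl fun c _ => by rw [comp_snoc]; rfl
        rw [Finset.sum_congr rfl h0, pow_succ, mul_neg_one, neg_smul, Finset.smul_sum]
      rw [Finset.sum_congr rfl h1, Finset.sum_neg_distrib, Finset.sum_comm]
      have h2 : ∀ m ∈ Finset.range (t + 1),
          ∑ r' ∈ Finset.range (t + 1), (-1 : ℤ) ^ r' • ∑ c ∈ Ifin r' (t - m), comp c (phi (m + 1) x)
            = PhiM (t - m) (phi (m + 1) x) := by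
        intro m hm
        rw [PhiM_eq]
        refine (Finset.sum_subset (Finset.range_subset_range.mpr (by omega)) ?_).symm
        intro r hr hnr
        rw [Finset.mem_range] at hr hnr
        rw [Ifin_empty_of_lt (by omega), Finset.sum_empty, smul_zero]
      rw [Finset.sum_congr rfl h2]
    rw [hPhi]
    abel

lemma C1b (s : ℕ) (x : DOne) :
    ∑ m ∈ Finset.range (s + 1), phi (s - m) (PhiM m x) = if s = 0 then x else 0 := by
  cases s with
  | zero =>
    rw [if_pos rfl, Finset.range_one, Finset.sum_singleton, phi_zero_eq]
    rfl
  | succ t =>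
    rw [if_neg (Nat.succ_ne_zero t)]
    rw [Finset.sum_range_succ (fun m => phi (t + 1 - m) (PhiM m x)) (t + 1)]
    simp only [Nat.sub_self, phi_zero_eq]
    have hPhi : PhiM (t + 1) x
        = -∑ q ∈ Finset.range (t + 1), phi (q + 1) (PhiM (t - q) x) := by
      rw [PhiM_eq]
      rw [Finset.sum_range_succ' (fun r => (-1 : ℤ) ^ r • ∑ c ∈ Ifin r (t + 1), comp c x) (t + 1)]
      rw [Ifin_zero_eq _ (Nat.succ_ne_zero t), Finset.sum_empty, smul_zero, add_zero]
      have h1 : ∀ r' ∈ Finset.range (t + 1),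
          (-1 : ℤ) ^ (r' + 1) • ∑ c ∈ Ifin (r' + 1) (t + 1), comp c x
            = -∑ q ∈ Finset.range (t + 1),
                (-1 : ℤ) ^ r' • ∑ c ∈ Ifin r' (t - q), phi (q + 1) (comp c x) := by
        intro r' _
        rw [peel_first r' (t + 1)]
        have h0 : ∀ q ∈ Finset.range (t + 1),
            ∑ c ∈ Ifin r' (t + 1 - (q + 1)), comp (Fin.cons (q + 1) c) x
              = ∑ c ∈ Ifin r' (t - q), phi (q + 1) (comp c x) := by
          intro q _
          rw [Nat.succ_sub_succ]
          refine Finset.sum_congr rfl fun c _ => ?_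
          have : comp (Fin.cons (q + 1) c) = phi (q + 1) ∘ comp c := by
            rw [comp_cons]
            simp only [Fin.cons_zero, Fin.tail_cons]
          rw [this]
          rfl
        rw [Finset.sum_congr rfl h0, pow_succ, mul_neg_one, neg_smul, Finset.smul_sum]
      rw [Finset.sum_congr rfl h1, Finset.sum_neg_distrib, Finset.sum_comm]
      have h2 : ∀ q ∈ Finset.range (t + 1),
          ∑ r' ∈ Finset.range (t + 1),
              (-1 : ℤ) ^ r' • ∑ c ∈ Ifin r' (t - q), phi (q + 1) (comp c x)
            = phi (q + 1) (PhiM (t - q) x) := by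
        intro q hq
        have hmap : phi (q + 1) (PhiM (t - q) x)
            = ∑ r ∈ Finset.range (t - q + 1),
                (-1 : ℤ) ^ r • ∑ c ∈ Ifin r (t - q), phi (q + 1) (comp c x) := by
          rw [PhiM_eq]
          rw [show phi (q + 1) = ⇑(phiH (q + 1)) from rfl]
          rw [map_sum (phiH (q + 1))]
          refine Finset.sum_congr rfl fun r _ => ?_
          rw [map_zsmul (phiH (q + 1))]
          rw [map_sum (phiH (q + 1))]
        rw [hmap]
        refine (Finset.sum_subset (Finset.range_subset_range.mpr (by omega)) ?_).symm
        intro r hr hnr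
        rw [Finset.mem_range] at hr hnr
        rw [Ifin_empty_of_lt (by omega), Finset.sum_empty, smul_zero]
      rw [Finset.sum_congr rfl h2]
    rw [hPhi]
    have hrefl : ∑ m ∈ Finset.range (t + 1), phi (t + 1 - m) (PhiM m x)
        = ∑ q ∈ Finset.range (t + 1), phi (q + 1) (PhiM (t - q) x) := by
      have h3 : ∑ q ∈ Finset.range (t + 1), phi (q + 1) (PhiM (t - q) x)
          = ∑ q ∈ Finset.range (t + 1), phi (t + 1 - (t - q)) (PhiM (t - q) x) := by
        refine Finset.sum_congr rfl fun q hq => ?_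
        rw [Finset.mem_range] at hq
        rw [show t + 1 - (t - q) = q + 1 by omega]
      rw [h3]
      exact (sum_range_reflect' t (fun m => phi (t + 1 - m) (PhiM m x))).symm
    rw [hrefl]
    abel

/-! triangle sums and the convolution lemma -/

lemma sum_triangle_swap {M : Type*} [AddCommMonoid M] (n : ℕ) (H : ℕ → ℕ → M) :
    ∑ j ∈ Finset.range (n + 1), ∑ m ∈ Finset.range (n - j + 1), H j m
      = ∑ m ∈ Finset.range (n + 1), ∑ j ∈ Finset.range (n - m + 1), H j m := by
  have key : ∀ (G : ℕ → M) (j : ℕ), j < n + 1 →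
      ∑ m ∈ Finset.range (n + 1), (if j + m ≤ n then G m else 0)
        = ∑ m ∈ Finset.range (n - j + 1), G m := by
    intro G j hj
    rw [← Finset.sum_filter]
    refine Finset.sum_congr ?_ (fun _ _ => rfl)
    ext a
    simp only [Finset.mem_filter, Finset.mem_range]
    omega
  have h1 : ∑ j ∈ Finset.range (n + 1), ∑ m ∈ Finset.range (n - j + 1), H j m
      = ∑ j ∈ Finset.range (n + 1), ∑ m ∈ Finset.range (n + 1),
          (if j + m ≤ n then H j m else 0) := by
    refine Finset.sum_congr rfl fun j hj => ?_
    rw [Finset.mem_range] at hj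
    exact (key (fun m => H j m) j hj).symm
  rw [h1, Finset.sum_comm]
  refine Finset.sum_congr rfl fun m hm => ?_
  rw [Finset.mem_range] at hm
  have h2 : ∀ j ∈ Finset.range (n + 1),
      (if j + m ≤ n then H j m else 0) = (if m + j ≤ n then H j m else 0) := by
    intro j _
    exact if_congr (by omega) rfl rfl
  rw [Finset.sum_congr rfl h2]
  exact key (fun j => H j m) m hm

lemma C1a' (s : ℕ) (z : DOne) :
    ∑ u ∈ Finset.range (s + 1), PhiM u (phi (s - u) z) = if s = 0 then z else 0 := by
  have h : ∀ u ∈ Finset.range (s + 1),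
      PhiM u (phi (s - u) z) = PhiM (s - (s - u)) (phi (s - u) z) := by
    intro u hu
    rw [Finset.mem_range] at hu
    rw [show s - (s - u) = u by omega]
  calc ∑ u ∈ Finset.range (s + 1), PhiM u (phi (s - u) z)
      = ∑ u ∈ Finset.range (s + 1), PhiM (s - (s - u)) (phi (s - u) z) :=
        Finset.sum_congr rfl h
    _ = ∑ m ∈ Finset.range (s + 1), PhiM (s - m) (phi m z) :=
        sum_range_reflect' s (fun m => PhiM (s - m) (phi m z))
    _ = if s = 0 then z else 0 := C1a s z

lemma C1b' (s : ℕ) (z : DOne) :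
    ∑ u ∈ Finset.range (s + 1), phi u (PhiM (s - u) z) = if s = 0 then z else 0 := by
  have h : ∀ u ∈ Finset.range (s + 1),
      phi u (PhiM (s - u) z) = phi (s - (s - u)) (PhiM (s - u) z) := by
    intro u hu
    rw [Finset.mem_range] at hu
    rw [show s - (s - u) = u by omega]
  calc ∑ u ∈ Finset.range (s + 1), phi u (PhiM (s - u) z)
      = ∑ u ∈ Finset.range (s + 1), phi (s - (s - u)) (PhiM (s - u) z) :=
        Finset.sum_congr rfl h
    _ = ∑ m ∈ Finset.range (s + 1), phi (s - m) (PhiM m z) :=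
        sum_range_reflect' s (fun m => phi (s - m) (PhiM m z))
    _ = if s = 0 then z else 0 := C1b s z

lemma Phi_conv (g : ℕ → DOne → DOne) (hgadd : ∀ m x y, g m (x + y) = g m x + g m y)
    (c : DOne)
    (hphi : ∀ s x, phi s (c * x) = ∑ m ∈ Finset.range (s + 1), g m (phi (s - m) x)) :
    ∀ n x, ∑ m ∈ Finset.range (n + 1), PhiM (n - m) (g m x) = c * PhiM n x := by
  have hg0 : ∀ m, g m 0 = 0 := by
    intro m
    have h := hgadd m 0 0
    rw [add_zero] at h
    exact (left_eq_add.mp h)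
  intro n x
  set F : ℕ → DOne → DOne := fun u y => ∑ m ∈ Finset.range (u + 1), PhiM (u - m) (g m y)
    with hFdef
  have hF0 : ∀ u, F u 0 = 0 := fun u =>
    Finset.sum_eq_zero fun m _ => by rw [hg0, PhiM_zero_right]
  have hFadd : ∀ u y z, F u (y + z) = F u y + F u z := by
    intro u y z
    show ∑ m ∈ Finset.range (u + 1), PhiM (u - m) (g m (y + z)) = _
    rw [Finset.sum_congr rfl (fun m (_ : m ∈ Finset.range (u + 1)) => by
      rw [hgadd, PhiM_add]), Finset.sum_add_distrib]
  have hFsum : ∀ (u : ℕ) (s : Finset ℕ) (f : ℕ → DOne),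
      F u (∑ i ∈ s, f i) = ∑ i ∈ s, F u (f i) := fun u s f =>
    map_sum (AddMonoidHom.mk' (F u) (hFadd u)) f s
  have step1 : ∀ (s : ℕ) (y : DOne),
      ∑ j ∈ Finset.range (s + 1), F (s - j) (phi j y) = if s = 0 then c * y else 0 := by
    intro s y
    have e1 : ∑ j ∈ Finset.range (s + 1), F (s - j) (phi j y)
        = ∑ j ∈ Finset.range (s + 1), ∑ m ∈ Finset.range (s - j + 1),
            PhiM (s - j - m) (g m (phi j y)) := rfl
    rw [e1, sum_triangle_swap s (fun j m => PhiM (s - j - m) (g m (phi j y)))]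
    have e2 : ∀ m ∈ Finset.range (s + 1),
        ∑ j ∈ Finset.range (s - m + 1), PhiM (s - j - m) (g m (phi j y))
          = ∑ u ∈ Finset.range (s - m + 1), PhiM u (g m (phi (s - m - u) y)) := by
      intro m hm
      rw [Finset.mem_range] at hm
      have e3 : ∀ j ∈ Finset.range (s - m + 1),
          PhiM (s - j - m) (g m (phi j y))
            = PhiM (s - m - j) (g m (phi (s - m - (s - m - j)) y)) := by
        intro j hj
        rw [Finset.mem_range] at hj
        rw [show s - m - (s - m - j) = j by omega, show s - j - m = s - m - j by omega]
      rw [Finset.sum_congr rfl e3]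
      exact sum_range_reflect' (s - m) (fun u => PhiM u (g m (phi (s - m - u) y)))
    rw [Finset.sum_congr rfl e2,
      sum_triangle_swap s (fun m u => PhiM u (g m (phi (s - m - u) y)))]
    have e4 : ∀ u ∈ Finset.range (s + 1),
        ∑ m ∈ Finset.range (s - u + 1), PhiM u (g m (phi (s - m - u) y))
          = PhiM u (phi (s - u) (c * y)) := by
      intro u hu
      rw [Finset.mem_range] at hu
      have e5 : ∀ m ∈ Finset.range (s - u + 1),
          PhiM u (g m (phi (s - m - u) y)) = PhiM u (g m (phi (s - u - m) y)) := by
        intro m _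
        rw [show s - m - u = s - u - m by omega]
      rw [Finset.sum_congr rfl e5, hphi (s - u) y]
      exact (map_sum (PhiMH u) (fun m => g m (phi (s - u - m) y))
        (Finset.range (s - u + 1))).symm
    rw [Finset.sum_congr rfl e4]
    exact C1a' s (c * y)
  -- step 2
  have e1 : ∑ l ∈ Finset.range (n + 1), ∑ j ∈ Finset.range (n - l + 1),
      F (n - l - j) (phi j (PhiM l x)) = c * PhiM n x := by
    have e2 : ∀ l ∈ Finset.range (n + 1),
        ∑ j ∈ Finset.range (n - l + 1), F (n - l - j) (phi j (PhiM l x))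
          = if n - l = 0 then c * PhiM l x else 0 := fun l _ => step1 (n - l) (PhiM l x)
    rw [Finset.sum_congr rfl e2]
    rw [Finset.sum_eq_single_of_mem n (Finset.self_mem_range_succ n)
      (fun l hl hne => by
        rw [Finset.mem_range] at hl
        rw [if_neg (by omega)])]
    rw [if_pos (by omega)]
  rw [← e1, sum_triangle_swap n (fun l j => F (n - l - j) (phi j (PhiM l x)))]
  have e6 : ∀ j ∈ Finset.range (n + 1),
      ∑ l ∈ Finset.range (n - j + 1), F (n - l - j) (phi j (PhiM l x))
        = ∑ u ∈ Finset.range (n - j + 1), F u (phi j (PhiM (n - j - u) x)) := by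
    intro j hj
    rw [Finset.mem_range] at hj
    have e7 : ∀ l ∈ Finset.range (n - j + 1),
        F (n - l - j) (phi j (PhiM l x))
          = F (n - j - l) (phi j (PhiM (n - j - (n - j - l)) x)) := by
      intro l hl
      rw [Finset.mem_range] at hl
      rw [show n - j - (n - j - l) = l by omega, show n - l - j = n - j - l by omega]
    rw [Finset.sum_congr rfl e7]
    exact sum_range_reflect' (n - j) (fun u => F u (phi j (PhiM (n - j - u) x)))
  rw [Finset.sum_congr rfl e6,
    sum_triangle_swap n (fun j u => F u (phi j (PhiM (n - j - u) x)))]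
  have e8 : ∀ u ∈ Finset.range (n + 1),
      ∑ j ∈ Finset.range (n - u + 1), F u (phi j (PhiM (n - j - u) x))
        = F u (if n - u = 0 then x else 0) := by
    intro u hu
    rw [Finset.mem_range] at hu
    have e9 : ∀ j ∈ Finset.range (n - u + 1),
        F u (phi j (PhiM (n - j - u) x)) = F u (phi j (PhiM (n - u - j) x)) := by
      intro j _
      rw [show n - j - u = n - u - j by omega]
    rw [Finset.sum_congr rfl e9, ← hFsum u, C1b' (n - u) x]
  rw [Finset.sum_congr rfl e8]
  refine Eq.symm ?_
  rw [Finset.sum_eq_single_of_mem n (Finset.self_mem_range_succ n)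
    (fun u hu hne => by
      rw [Finset.mem_range] at hu
      rw [if_neg (by omega), hF0])]
  rw [if_pos (by omega)]

/-! the key commutation of `PhiM` with left multiplication by `z₁` -/

def aT : ℕ → DOne → DOne
  | 0, x => zO * x
  | m + 1, x => xiO * zO ^ (m + 1) * x

def bT (m : ℕ) (x : DOne) : DOne := xiO * zO ^ m * x

lemma aT_add (m : ℕ) (x y : DOne) : aT m (x + y) = aT m x + aT m y := by
  cases m with
  | zero => exact mul_add _ _ _
  | succ m => exact mul_add _ _ _

lemma bT_add (m : ℕ) (x y : DOne) : bT m (x + y) = bT m x + bT m y := mul_add _ _ _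

lemma phi_z' (s : ℕ) (x : DOne) :
    phi s (zO * x) = ∑ m ∈ Finset.range (s + 1), aT m (phi (s - m) x) := by
  rw [phi_z, Finset.sum_range_succ' (fun m => aT m (phi (s - m) x)) s]
  have h0 : aT 0 (phi (s - 0) x) = zO * phi s x := by rw [Nat.sub_zero]; rfl
  rw [h0]
  have h1 : ∑ i ∈ Finset.Icc 1 s, xiO * zO ^ i * phi (s - i) x
      = ∑ j ∈ Finset.range s, aT (j + 1) (phi (s - (j + 1)) x) := by
    refine Finset.sum_nbij' (fun i => i - 1) (fun j => j + 1) ?_ ?_ ?_ ?_ ?_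
    · intro i hi
      rw [Finset.mem_Icc] at hi
      show i - 1 ∈ Finset.range s
      rw [Finset.mem_range]
      omega
    · intro j hj
      rw [Finset.mem_range] at hj
      show j + 1 ∈ Finset.Icc 1 s
      rw [Finset.mem_Icc]
      omega
    · intro i hi
      rw [Finset.mem_Icc] at hi
      show i - 1 + 1 = i
      omega
    · intro j _
      show j + 1 - 1 = j
      omega
    · intro i hi
      rw [Finset.mem_Icc] at hi
      show xiO * zO ^ i * phi (s - i) x = aT (i - 1 + 1) (phi (s - (i - 1 + 1)) x)
      rw [show i - 1 + 1 = i by omega]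
      obtain ⟨k, rfl⟩ : ∃ k, i = k + 1 := ⟨i - 1, by omega⟩
      rfl
  rw [h1]
  abel

lemma phi_xi' (s : ℕ) (x : DOne) :
    phi s (xiO * x) = ∑ m ∈ Finset.range (s + 1), bT m (phi (s - m) x) := phi_xi s x

lemma Ca (n : ℕ) (x : DOne) :
    ∑ m ∈ Finset.range (n + 1), PhiM (n - m) (aT m x) = zO * PhiM n x :=
  Phi_conv aT aT_add zO phi_z' n x

lemma Cb (n : ℕ) (x : DOne) :
    ∑ m ∈ Finset.range (n + 1), PhiM (n - m) (bT m x) = xiO * PhiM n x :=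
  Phi_conv bT bT_add xiO phi_xi' n x

lemma PhiM_z (n : ℕ) (w : DOne) :
    zO * PhiM (n + 1) w = PhiM (n + 1) (zO * w) + xiO * PhiM n (zO * w) := by
  rw [← Ca (n + 1) w]
  rw [Finset.sum_range_succ' (fun m => PhiM (n + 1 - m) (aT m w)) (n + 1)]
  have h0 : PhiM (n + 1 - 0) (aT 0 w) = PhiM (n + 1) (zO * w) := rfl
  rw [h0]
  have h1 : ∑ j ∈ Finset.range (n + 1), PhiM (n + 1 - (j + 1)) (aT (j + 1) w)
      = xiO * PhiM n (zO * w) := by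
    rw [← Cb n (zO * w)]
    refine Finset.sum_congr rfl fun j _ => ?_
    rw [Nat.succ_sub_succ]
    have : bT j (zO * w) = aT (j + 1) w := by
      show xiO * zO ^ j * (zO * w) = xiO * zO ^ (j + 1) * w
      rw [mul_assoc, ← mul_assoc (zO ^ j), ← pow_succ, ← mul_assoc]
    rw [this]
  rw [h1]
  abel

/-! toD1 and dmap lemmas -/

lemma toD1_add (x y : DOne) : toD1 (x + y) = toD1 x + toD1 y := by
  unfold toD1; rw [MonoidAlgebra.coeff_add, Finsupp.mapDomain_add, MonoidAlgebra.ofCoeff_add]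

lemma toD1_single (g : FreeMonoid Bool) (a : ℤ) :
    toD1 (MonoidAlgebra.single g a)
      = MonoidAlgebra.single
            ((FreeMonoid.map fun b => if b then Sum.inr 1 else Sum.inl 1) g) a := by
  unfold toD1
  rw [MonoidAlgebra.coeff_single, Finsupp.mapDomain_single, MonoidAlgebra.ofCoeff_single]

lemma toD1_z (u : DOne) : toD1 (zO * u) = zL 1 * toD1 u := by
  induction u using MonoidAlgebra.induction_linear with
  | zero => simp [toD1]
  | add f g hf hg => rw [mul_add, toD1_add, hf, hg, toD1_add, mul_add]
  | single g a =>
    rw [zO_mul_single, toD1_single, toD1_single, zL_mul_single, map_mul]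
    rfl

lemma toD1_xi (u : DOne) : toD1 (xiO * u) = xiL 1 * toD1 u := by
  induction u using MonoidAlgebra.induction_linear with
  | zero => simp [toD1]
  | add f g hf hg => rw [mul_add, toD1_add, hf, hg, toD1_add, mul_add]
  | single g a =>
    rw [xiO_mul_single, toD1_single, toD1_single, xiL_mul_single, map_mul]
    rfl

lemma toList_of_pow (a : ℕ) : FreeMonoid.toList ((FreeMonoid.of (1 : ℕ+)) ^ a)
    = List.replicate a (1 : ℕ+) := by
  induction a with
  | zero => rfl
  | succ a ih =>
    rw [pow_succ, FreeMonoid.toList_mul, ih, FreeMonoid.toList_of, List.replicate_succ']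

lemma dmap_pow (a : ℕ) : dmap (xiX 1 ^ a) = Dl a := by
  have h1 : (xiX 1 : DXi) ^ a
      = MonoidAlgebra.single ((FreeMonoid.of (1 : ℕ+)) ^ a) 1 := by
    rw [xiX, MonoidAlgebra.single_pow, one_pow]
  rw [h1]
  unfold dmap
  rw [MonoidAlgebra.coeff_single, Finsupp.sum_single_index (by simp)]
  rw [one_smul, toList_of_pow]
  rfl

/-! assembly -/

def Pf (w : DOne) (m : ℕ) : Dfree :=
  ∑ l ∈ Finset.range (m + 1), rho (Dl (m - l)) (zL 1 * toD1 (PhiM l w))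

def Pf' (w : DOne) (m : ℕ) : Dfree :=
  ∑ l ∈ Finset.range (m + 1), rho (Dl (m - l)) (toD1 (PhiM l (zO * w)))

def Qf (w : DOne) (m : ℕ) : Dfree :=
  ∑ j ∈ Finset.range m, rho (Dl (m - (j + 1))) (xiL 1 * toD1 (PhiM j (zO * w)))

def Rf (w : DOne) (m : ℕ) : Dfree :=
  ∑ l ∈ Finset.range (m + 1), rho (Dl (m - l)) (toD1 (PhiM l w))

lemma Zmap_eq_Rf (w : DOne) (m : ℕ) : Zmap m w = Rf w m := by
  unfold Zmap Rf
  exact Finset.sum_congr rfl fun l _ => by rw [dmap_pow]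

lemma Zmap_eq_Pf' (w : DOne) (m : ℕ) : Zmap m (zO * w) = Pf' w m := by
  unfold Zmap Pf'
  exact Finset.sum_congr rfl fun l _ => by rw [dmap_pow]

lemma Qf_zero (w : DOne) : Qf w 0 = 0 := by
  unfold Qf
  rw [Finset.range_zero, Finset.sum_empty]

lemma F1 (w : DOne) (m : ℕ) : Pf w m = Pf' w m + Qf w m := by
  unfold Pf Pf' Qf
  rw [Finset.sum_range_succ'
    (fun l => rho (Dl (m - l)) (zL 1 * toD1 (PhiM l w))) m]
  rw [Finset.sum_range_succ'
    (fun l => rho (Dl (m - l)) (toD1 (PhiM l (zO * w)))) m]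
  have h0 : rho (Dl (m - 0)) (zL 1 * toD1 (PhiM 0 w))
      = rho (Dl (m - 0)) (toD1 (PhiM 0 (zO * w))) := by
    rw [← toD1_z]
    rfl
  have h1 : ∀ j ∈ Finset.range m,
      rho (Dl (m - (j + 1))) (zL 1 * toD1 (PhiM (j + 1) w))
        = rho (Dl (m - (j + 1))) (toD1 (PhiM (j + 1) (zO * w)))
          + rho (Dl (m - (j + 1))) (xiL 1 * toD1 (PhiM j (zO * w))) := by
    intro j _
    rw [← toD1_z, PhiM_z j w, toD1_add, toD1_xi, rho_add_right]
  rw [Finset.sum_congr rfl h1, Finset.sum_add_distrib, h0]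
  abel

lemma F2 (w : DOne) (m : ℕ) :
    Pf w m = (∑ k ∈ Finset.range (m + 1), xiLN k * Pf w (m - k))
      + ∑ k ∈ Finset.range (m + 1), zOf (k + 1) * Rf w (m - k) := by
  unfold Pf Rf
  have hterm : ∀ l ∈ Finset.range (m + 1),
      rho (Dl (m - l)) (zL 1 * toD1 (PhiM l w))
        = (∑ k ∈ Finset.range (m - l + 1),
            xiLN k * rho (Dl (m - l - k)) (zL 1 * toD1 (PhiM l w)))
          + ∑ k ∈ Finset.range (m - l + 1),
              zOf (k + 1) * rho (Dl (m - l - k)) (toD1 (PhiM l w)) :=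
    fun l _ => rho_D_z (m - l) _
  rw [Finset.sum_congr rfl hterm, Finset.sum_add_distrib]
  congr 1
  · rw [sum_triangle_swap m
      (fun l k => xiLN k * rho (Dl (m - l - k)) (zL 1 * toD1 (PhiM l w)))]
    refine Finset.sum_congr rfl fun k hk => ?_
    rw [Finset.mem_range] at hk
    rw [Finset.mul_sum]
    refine Finset.sum_congr rfl fun l hl => ?_
    rw [Finset.mem_range] at hl
    rw [show m - l - k = m - k - l from by omega]
  · rw [sum_triangle_swap m
      (fun l k => zOf (k + 1) * rho (Dl (m - l - k)) (toD1 (PhiM l w)))]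
    refine Finset.sum_congr rfl fun k hk => ?_
    rw [Finset.mem_range] at hk
    rw [Finset.mul_sum]
    refine Finset.sum_congr rfl fun l hl => ?_
    rw [Finset.mem_range] at hl
    rw [show m - l - k = m - k - l from by omega]

lemma F3 (w : DOne) (m : ℕ) :
    Qf w m = (∑ k ∈ Finset.range (m + 1), xiLN k * Qf w (m - k))
      + ∑ k ∈ Finset.range (m + 1), xiLN k * Pf' w (m - k) := by
  cases m with
  | zero =>
    rw [Qf_zero, Finset.range_one, Finset.sum_singleton, Finset.sum_singleton,
      xiLN_zero, zero_mul, zero_mul, add_zero]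
  | succ n =>
    have hq : Qf w (n + 1) = ∑ j ∈ Finset.range (n + 1),
        rho (Dl (n - j)) (xiL 1 * toD1 (PhiM j (zO * w))) := by
      unfold Qf
      exact Finset.sum_congr rfl fun j _ => by rw [Nat.succ_sub_succ]
    rw [hq]
    have hterm : ∀ j ∈ Finset.range (n + 1),
        rho (Dl (n - j)) (xiL 1 * toD1 (PhiM j (zO * w)))
          = (∑ k ∈ Finset.range (n - j + 1),
              xiLN k * rho (Dl (n - j - k)) (xiL 1 * toD1 (PhiM j (zO * w))))
            + ∑ k ∈ Finset.range (n - j + 1),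
                xiLN (k + 1) * rho (Dl (n - j - k)) (toD1 (PhiM j (zO * w))) :=
      fun j _ => rho_D_xi (n - j) _
    rw [Finset.sum_congr rfl hterm, Finset.sum_add_distrib]
    congr 1
    · rw [sum_triangle_swap n
        (fun j k => xiLN k * rho (Dl (n - j - k)) (xiL 1 * toD1 (PhiM j (zO * w))))]
      rw [Finset.sum_range_succ
        (fun k => xiLN k * Qf w (n + 1 - k)) (n + 1)]
      rw [Nat.sub_self, Qf_zero, mul_zero, add_zero]
      refine Finset.sum_congr rfl fun k hk => ?_
      rw [Finset.mem_range] at hk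
      unfold Qf
      rw [show n + 1 - k = n - k + 1 from by omega, Finset.mul_sum]
      refine Finset.sum_congr rfl fun j hj => ?_
      rw [Finset.mem_range] at hj
      rw [show n - k + 1 - (j + 1) = n - j - k from by omega]
    · rw [sum_triangle_swap n
        (fun j k => xiLN (k + 1) * rho (Dl (n - j - k)) (toD1 (PhiM j (zO * w))))]
      rw [Finset.sum_range_succ'
        (fun k => xiLN k * Pf' w (n + 1 - k)) (n + 1)]
      rw [xiLN_zero, zero_mul, add_zero]
      refine Finset.sum_congr rfl fun k hk => ?_
      rw [Finset.mem_range] at hk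
      unfold Pf'
      rw [Nat.succ_sub_succ, Finset.mul_sum]
      refine Finset.sum_congr rfl fun j hj => ?_
      rw [Finset.mem_range] at hj
      rw [show n - j - k = n - k - j from by omega]

theorem Z_z_mul' (w : DOne) (s : ℕ) :
    Zmap s (zO * w) = ∑ l ∈ Finset.range (s + 1), zOf (l + 1) * Zmap (s - l) w := by
  rw [Zmap_eq_Pf']
  rw [Finset.sum_congr rfl (fun l (_ : l ∈ Finset.range (s + 1)) => by
    rw [Zmap_eq_Rf w (s - l)])]
  have key : Pf' w s + Qf w s
      = (∑ l ∈ Finset.range (s + 1), zOf (l + 1) * Rf w (s - l)) + Qf w s := by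
    calc Pf' w s + Qf w s = Pf w s := (F1 w s).symm
      _ = (∑ k ∈ Finset.range (s + 1), xiLN k * Pf w (s - k))
            + ∑ k ∈ Finset.range (s + 1), zOf (k + 1) * Rf w (s - k) := F2 w s
      _ = (∑ k ∈ Finset.range (s + 1),
              (xiLN k * Pf' w (s - k) + xiLN k * Qf w (s - k)))
            + ∑ k ∈ Finset.range (s + 1), zOf (k + 1) * Rf w (s - k) := by
          refine congrArg (· + _) (Finset.sum_congr rfl fun k _ => ?_)
          rw [F1 w (s - k), mul_add]
      _ = ((∑ k ∈ Finset.range (s + 1), xiLN k * Qf w (s - k))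
            + ∑ k ∈ Finset.range (s + 1), xiLN k * Pf' w (s - k))
            + ∑ k ∈ Finset.range (s + 1), zOf (k + 1) * Rf w (s - k) := by
          rw [Finset.sum_add_distrib]
          abel
      _ = Qf w s + ∑ k ∈ Finset.range (s + 1), zOf (k + 1) * Rf w (s - k) := by
          rw [← F3 w s]
      _ = (∑ l ∈ Finset.range (s + 1), zOf (l + 1) * Rf w (s - l)) + Qf w s :=
          add_comm _ _
  exact add_right_cancel key

/-- For every `w ∈ 𝔡₁` and every integer `s ≥ 0`,
`Z_s(z_1 w) = Σ_{ℓ=0}^{s} z_{ℓ+1} Z_{s-ℓ}(w)`. -/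
theorem Z_z_mul (w : DOne) (s : ℕ) :
    Zmap s (zO * w) = ∑ l ∈ Finset.range (s + 1), zOf (l + 1) * Zmap (s - l) w :=
  Z_z_mul' w s

end
end

section
/- For all positive integers m > n, one has Σ_{ℓ=1}^{∞} (q^{ℓ+m}/[ℓ+m]) · (1/[ℓ+n]) = (q^{m−n}/[m−n]) · Σ_{ℓ=1}^{m−n} q^{ℓ+n}/[ℓ+n], and in particular the series on the left converges. -/
open scoped BigOperators

noncomputable section

attribute [local instance 10] Classical.propDecidable

private lemma telescoping_aux (q A P : ℝ) (hq : (1:ℝ) - q ≠ 0) (hA : (1:ℝ) - A ≠ 0)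
    (hAP : (1:ℝ) - A * P ≠ 0) (hP : (1:ℝ) - P ≠ 0) :
    A * P / ((1 - A * P) / (1 - q)) * (1 / ((1 - A) / (1 - q)))
      = ((1 - q) * P / ((1 - P) / (1 - q))) * (A / (1 - A) - A * P / (1 - A * P)) := by
  field_simp
  ring

/-- For all positive integers `m > n`,
`Σ_{ℓ=1}^{∞} (q^{ℓ+m}/[ℓ+m]) (1/[ℓ+n]) = (q^{m-n}/[m-n]) Σ_{ℓ=1}^{m-n} q^{ℓ+n}/[ℓ+n]`,
and in particular the series on the left converges. -/
theorem telescoping_sum (q : ℝ) (hq0 : 0 < q) (hq1 : q < 1)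
    (m n : ℕ) (hn : 0 < n) (hnm : n < m) :
    Summable (fun l : ℕ+ =>
        q ^ ((l : ℕ) + m) / qint q ((l : ℕ) + m) * (1 / qint q ((l : ℕ) + n))) ∧
      (∑' l : ℕ+, q ^ ((l : ℕ) + m) / qint q ((l : ℕ) + m) * (1 / qint q ((l : ℕ) + n))) =
        q ^ (m - n) / qint q (m - n) * ∑ l ∈ Finset.Icc 1 (m - n), q ^ (l + n) / qint q (l + n) := by
  have hq1' : (0:ℝ) < 1 - q := by linarith
  set d := m - n with hd
  have hd0 : 0 < d := Nat.sub_pos_of_lt hnm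
  have hmd : d + n = m := Nat.sub_add_cancel hnm.le
  have hpow : ∀ k : ℕ, 0 < k → (0:ℝ) < 1 - q ^ k := by
    intro k hk
    have : q ^ k < 1 := pow_lt_one₀ hq0.le hq1 hk.ne'
    linarith
  set F : ℕ → ℝ := fun k => q ^ k / (1 - q ^ k) with hF
  set C : ℝ := (1 - q) * q ^ d / qint q d with hC
  -- pointwise identity
  have key : ∀ l : ℕ+,
      q ^ ((l : ℕ) + m) / qint q ((l : ℕ) + m) * (1 / qint q ((l : ℕ) + n))
        = C * (F ((l:ℕ) + n) - F ((l:ℕ) + m)) := by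
    intro l
    have hAn : (0:ℝ) < 1 - q ^ ((l:ℕ) + n) := hpow _ (by positivity)
    have hAm : (0:ℝ) < 1 - q ^ ((l:ℕ) + m) := hpow _ (by positivity)
    have hD : (0:ℝ) < 1 - q ^ d := hpow _ hd0
    have hBm : q ^ ((l:ℕ) + m) = q ^ ((l:ℕ) + n) * q ^ d := by
      rw [← pow_add, ← hmd]; ring_nf
    have hAm' : (1:ℝ) - q ^ ((l:ℕ) + n) * q ^ d ≠ 0 := by rw [← hBm]; exact hAm.ne'
    simp only [hF, hC, qint, hBm]
    exact telescoping_aux q _ _ hq1'.ne' hAn.ne' hAm' hD.ne'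
  -- summability of shifted F over ℕ
  have hFsum : ∀ j : ℕ, Summable (fun i : ℕ => F (i + 1 + j)) := by
    intro j
    apply Summable.of_nonneg_of_le (fun i => ?_) (fun i => ?_)
      (((summable_geometric_of_lt_one hq0.le hq1).mul_left (q ^ (1 + j) / (1 - q))))
    · have := hpow (i + 1 + j) (by positivity)
      positivity
    · have hk := hpow (i + 1 + j) (by positivity)
      have hle : q ^ (i + 1 + j) ≤ q := by
        calc q ^ (i + 1 + j) = q ^ (i + j) * q := by
              rw [show i + 1 + j = (i + j) + 1 by ring, pow_succ]
          _ ≤ 1 * q := mul_le_mul_of_nonneg_right (pow_le_one₀ hq0.le hq1.le) hq0.le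
          _ = q := one_mul q
      have h1 : (1:ℝ) - q ≤ 1 - q ^ (i + 1 + j) := by linarith
      have : F (i + 1 + j) ≤ q ^ (i + 1 + j) / (1 - q) :=
        div_le_div_of_nonneg_left (by positivity) hq1' h1
      calc F (i + 1 + j) ≤ q ^ (i + 1 + j) / (1 - q) := this
        _ = q ^ (1 + j) / (1 - q) * q ^ i := by
            rw [show i + 1 + j = 1 + j + i by ring, pow_add]; ring
  -- transfer to ℕ+
  have htrans : ∀ j : ℕ, Summable (fun l : ℕ+ => F ((l:ℕ) + j)) ∧
      (∑' l : ℕ+, F ((l:ℕ) + j)) = ∑' i : ℕ, F (i + 1 + j) := by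
    intro j
    have he : ∀ i : ℕ, F (((Equiv.pnatEquivNat.symm i : ℕ+) : ℕ) + j) = F (i + 1 + j) := by
      intro i; simp [Equiv.pnatEquivNat, Nat.succPNat]
    constructor
    · rw [← Equiv.summable_iff Equiv.pnatEquivNat.symm]
      exact (hFsum j).congr fun i => (he i).symm
    · rw [← Equiv.tsum_eq Equiv.pnatEquivNat.symm]
      exact tsum_congr he
  have hsn := (htrans n).1
  have hsm := (htrans m).1
  have hsub : Summable (fun l : ℕ+ => F ((l:ℕ) + n) - F ((l:ℕ) + m)) := hsn.sub hsm
  have hSummable : Summable (fun l : ℕ+ =>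
      q ^ ((l : ℕ) + m) / qint q ((l : ℕ) + m) * (1 / qint q ((l : ℕ) + n))) := by
    exact (hsub.mul_left C).congr fun l => (key l).symm
  refine ⟨hSummable, ?_⟩
  -- compute tsum
  have h1 : (∑' l : ℕ+, q ^ ((l : ℕ) + m) / qint q ((l : ℕ) + m) * (1 / qint q ((l : ℕ) + n)))
      = C * ((∑' l : ℕ+, F ((l:ℕ) + n)) - ∑' l : ℕ+, F ((l:ℕ) + m)) := by
    rw [tsum_congr key, tsum_mul_left, Summable.tsum_sub hsn hsm]
  have h2 : (∑' i : ℕ, F (i + 1 + m)) = ∑' i : ℕ, F ((i + d) + 1 + n) := by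
    apply tsum_congr; intro i; congr 1; omega
  have h3 : (∑' l : ℕ+, F ((l:ℕ) + n)) - (∑' l : ℕ+, F ((l:ℕ) + m))
      = ∑ i ∈ Finset.range d, F (i + 1 + n) := by
    rw [(htrans n).2, (htrans m).2, h2]
    have := (hFsum n).sum_add_tsum_nat_add d
    linarith
  rw [h1, h3]
  -- finite sum reindexing
  have h4 : (∑ l ∈ Finset.Icc 1 d, q ^ (l + n) / qint q (l + n))
      = ∑ i ∈ Finset.range d, (1 - q) * F (i + 1 + n) := by
    rw [show Finset.Icc 1 d = Finset.Ico 1 (d + 1) by rw [Finset.Ico_add_one_right_eq_Icc],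
      Finset.sum_Ico_eq_sum_range]
    simp only [Nat.add_sub_cancel]
    apply Finset.sum_congr rfl
    intro i _
    have hk := hpow (1 + i + n) (by positivity)
    simp only [hF, qint]
    rw [show i + 1 + n = 1 + i + n by ring]
    field_simp
  rw [h4, Finset.mul_sum, Finset.mul_sum]
  apply Finset.sum_congr rfl
  intro i _
  simp only [hC, qint]
  have hD : (0:ℝ) < 1 - q ^ d := hpow _ hd0
  field_simp

end
end

section
/- For every integer k ≥ 2 and all positive integers m_1 > m_2, one has Σ_{β∈I(2,k)} q^{(β_1−1)m_1+(β_2−1)m_2}/([m_1]^{β_1}[m_2]^{β_2}) = (q^{(k−2)m_2}/[m_2]^{k−1}) · (1/[m_1−m_2]) − (q^{(k−2)m_1}/[m_1]^{k−1}) · (q^{m_1−m_2}/[m_1−m_2]), where the sum is over all pairs (β_1,β_2) of positive integers with β_1+β_2 = k. -/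
open scoped BigOperators

noncomputable section

attribute [local instance 10] Classical.propDecidable

lemma qint_pos {q : ℝ} (hq0 : 0 < q) (hq1 : q < 1) {n : ℕ} (hn : 0 < n) :
    0 < qint q n := by
  have h1 : q ^ n < 1 := pow_lt_one₀ hq0.le hq1 hn.ne'
  exact div_pos (by linarith) (by linarith)

lemma qint_sub {q : ℝ} (hq1 : q < 1) {m₁ m₂ : ℕ} (hm : m₂ ≤ m₁) :
    qint q m₁ - q ^ (m₁ - m₂) * qint q m₂ = qint q (m₁ - m₂) := by
  have h : q ^ (m₁ - m₂) * q ^ m₂ = q ^ m₁ := by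
    rw [← pow_add]; congr 1; omega
  have h1 : (1:ℝ) - q ≠ 0 := by intro h'; nlinarith
  unfold qint
  field_simp
  linear_combination h

lemma sum_Ifin_two (k : ℕ) (f : (Fin 2 → ℕ) → ℝ) :
    ∑ β ∈ Ifin 2 k, f β = ∑ i ∈ Finset.Ioo 0 k, f ![i, k - i] := by
  apply Finset.sum_nbij' (fun β => β 0) (fun i => ![i, k - i])
  · intro β hβ
    simp only [Ifin, Finset.mem_filter, Fintype.mem_piFinset, Finset.mem_Icc,
      Fin.sum_univ_two] at hβ
    have h0 := hβ.1 0
    have h1 := hβ.1 1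
    simp only [Finset.mem_Ioo]
    omega
  · intro i hi
    simp only [Finset.mem_Ioo] at hi
    simp only [Ifin, Finset.mem_filter, Fintype.mem_piFinset, Finset.mem_Icc,
      Fin.sum_univ_two, Matrix.cons_val_zero, Matrix.cons_val_one, Matrix.head_cons]
    constructor
    · intro j
      fin_cases j <;> simp <;> omega
    · omega
  · intro β hβ
    simp only [Ifin, Finset.mem_filter, Fintype.mem_piFinset, Finset.mem_Icc,
      Fin.sum_univ_two] at hβ
    funext j
    fin_cases j <;> simp <;> omega
  · intro i hi
    simp
  · intro β hβ
    simp only [Ifin, Finset.mem_filter, Fintype.mem_piFinset, Finset.mem_Icc,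
      Fin.sum_univ_two] at hβ
    congr 1
    funext j
    fin_cases j <;> simp <;> omega

lemma main_sum (q : ℝ) (hq0 : 0 < q) (hq1 : q < 1) (m₁ m₂ : ℕ) (hm₂ : 0 < m₂)
    (hm : m₂ < m₁) (j : ℕ) :
    ∑ i ∈ Finset.Ioo 0 (j + 2),
        q ^ ((i - 1) * m₁ + (j + 1 - i) * m₂) / (qint q m₁ ^ i * qint q m₂ ^ (j + 2 - i)) =
      q ^ (j * m₂) / qint q m₂ ^ (j + 1) * (1 / qint q (m₁ - m₂)) -
        q ^ (j * m₁) / qint q m₁ ^ (j + 1) * (q ^ (m₁ - m₂) / qint q (m₁ - m₂)) := by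
  have hA : qint q m₁ ≠ 0 := (qint_pos hq0 hq1 (by omega)).ne'
  have hB : qint q m₂ ≠ 0 := (qint_pos hq0 hq1 hm₂).ne'
  have hD : qint q (m₁ - m₂) ≠ 0 := (qint_pos hq0 hq1 (by omega)).ne'
  have hDe : qint q m₁ - q ^ (m₁ - m₂) * qint q m₂ = qint q (m₁ - m₂) :=
    qint_sub hq1 hm.le
  have hpow : q ^ (m₁ - m₂) * q ^ m₂ = q ^ m₁ := by rw [← pow_add]; congr 1; omega
  induction j with
  | zero =>
    have h2 : Finset.Ioo 0 2 = {1} := by decide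
    rw [h2, Finset.sum_singleton]
    norm_num
    rw [← hDe] at hD ⊢
    field_simp
    rw [div_self (by rwa [mul_comm (q ^ (m₁ - m₂))] at hD)]
  | succ j ih =>
    have hsplit : Finset.Ioo 0 (j + 3) = insert (j + 2) (Finset.Ioo 0 (j + 2)) := by
      ext x; simp [Finset.mem_Ioo]; omega
    rw [hsplit, Finset.sum_insert (by simp)]
    have hcongr : ∀ i ∈ Finset.Ioo 0 (j + 2),
        q ^ ((i - 1) * m₁ + (j + 2 - i) * m₂) / (qint q m₁ ^ i * qint q m₂ ^ (j + 3 - i)) =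
        q ^ m₂ / qint q m₂ *
          (q ^ ((i - 1) * m₁ + (j + 1 - i) * m₂) / (qint q m₁ ^ i * qint q m₂ ^ (j + 2 - i))) := by
      intro i hi
      simp only [Finset.mem_Ioo] at hi
      have e1 : (i - 1) * m₁ + (j + 2 - i) * m₂ = m₂ + ((i - 1) * m₁ + (j + 1 - i) * m₂) := by
        have : j + 2 - i = (j + 1 - i) + 1 := by omega
        rw [this, Nat.succ_mul]; ring
      have e2 : j + 3 - i = (j + 2 - i) + 1 := by omega
      rw [e1, e2, pow_add, pow_succ]
      ring
    rw [Finset.sum_congr rfl hcongr, ← Finset.mul_sum, ih]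
    have t1 : q ^ ((j + 2 - 1) * m₁ + (j + 1 + 1 - (j + 2)) * m₂)
        = q ^ (m₁ - m₂) * q ^ m₂ * q ^ (j * m₁) := by
      rw [hpow, ← pow_add]; congr 1
      rw [show j + 2 - 1 = j + 1 by omega, show j + 1 + 1 - (j + 2) = 0 by omega, Nat.succ_mul]
      ring
    have t2 : qint q m₂ ^ (j + 1 + 2 - (j + 2)) = qint q m₂ := by
      rw [show j + 1 + 2 - (j + 2) = 1 by omega, pow_one]
    have t3 : q ^ ((j + 1) * m₂) = q ^ m₂ * q ^ (j * m₂) := by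
      rw [← pow_add]; congr 1; rw [Nat.succ_mul]; ring
    have t4 : q ^ ((j + 1) * m₁) = q ^ (m₁ - m₂) * q ^ m₂ * q ^ (j * m₁) := by
      rw [hpow, ← pow_add]; congr 1; rw [Nat.succ_mul]; ring
    have t5 : qint q m₁ ^ (j + 2) = qint q m₁ ^ j * qint q m₁ ^ 2 := by rw [← pow_add]
    have t6 : qint q m₂ ^ (j + 1 + 1) = qint q m₂ ^ j * qint q m₂ ^ 2 := by
      rw [← pow_add]
    have t8 : qint q m₁ ^ (j + 1) = qint q m₁ ^ j * qint q m₁ := by rw [pow_succ]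
    have t9 : qint q m₂ ^ (j + 1) = qint q m₂ ^ j * qint q m₂ := by rw [pow_succ]
    rw [t1, t2, t3, t4, t5, t6, t8, t9]
    rw [← hDe] at hD ⊢
    have hAj : qint q m₁ ^ j ≠ 0 := pow_ne_zero _ hA
    have hBj : qint q m₂ ^ j ≠ 0 := pow_ne_zero _ hB
    field_simp
    ring

/-- For every integer `k ≥ 2` and all positive integers `m_1 > m_2`,
`Σ_{β ∈ I(2,k)} q^{(β_1-1)m_1+(β_2-1)m_2}/([m_1]^{β_1}[m_2]^{β_2})
  = (q^{(k-2)m_2}/[m_2]^{k-1}) (1/[m_1-m_2]) - (q^{(k-2)m_1}/[m_1]^{k-1}) (q^{m_1-m_2}/[m_1-m_2])`. -/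
theorem partial_fraction (q : ℝ) (hq0 : 0 < q) (hq1 : q < 1)
    (k : ℕ) (hk : 2 ≤ k) (m₁ m₂ : ℕ) (hm₂ : 0 < m₂) (hm : m₂ < m₁) :
    (∑ β ∈ Ifin 2 k,
        q ^ ((β 0 - 1) * m₁ + (β 1 - 1) * m₂) / (qint q m₁ ^ β 0 * qint q m₂ ^ β 1)) =
      q ^ ((k - 2) * m₂) / qint q m₂ ^ (k - 1) * (1 / qint q (m₁ - m₂)) -
        q ^ ((k - 2) * m₁) / qint q m₁ ^ (k - 1) * (q ^ (m₁ - m₂) / qint q (m₁ - m₂)) := by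

  obtain ⟨j, rfl⟩ : ∃ j, k = j + 2 := ⟨k - 2, by omega⟩
  have hcongr : ∀ i ∈ Finset.Ioo 0 (j + 2),
      q ^ (((![i, j + 2 - i] : Fin 2 → ℕ) 0 - 1) * m₁ + ((![i, j + 2 - i] : Fin 2 → ℕ) 1 - 1) * m₂) /
          (qint q m₁ ^ (![i, j + 2 - i] : Fin 2 → ℕ) 0 * qint q m₂ ^ (![i, j + 2 - i] : Fin 2 → ℕ) 1) =
        q ^ ((i - 1) * m₁ + (j + 1 - i) * m₂) / (qint q m₁ ^ i * qint q m₂ ^ (j + 2 - i)) := by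
    intro i hi
    simp only [Finset.mem_Ioo] at hi
    simp only [Matrix.cons_val_zero, Matrix.cons_val_one, Matrix.head_cons]
    rw [show j + 2 - i - 1 = j + 1 - i by omega]
  rw [sum_Ifin_two, Finset.sum_congr rfl hcongr, main_sum q hq0 hq1 m₁ m₂ hm₂ hm j]
  norm_num

end
end
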